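/- arXiv:2201.01169 — 10 statements merged into one kernel-verified Lean document; each statement's English description precedes it below -/
import Mathlib

section
/- Let τ ≥ 1 and let (η_k)_{k≥0} be positive real numbers such that η_j/η_k < τ for all j, k ≥ 0. Let (α_k)_{k≥0} be a sequence in (0, 1] satisfying, for every k ≥ 1, the recursion 1/α_k² − 1/α_k = (1/α_{k−1}²)·(η_{k−1}/η_k). Then for every k ≥ 0, one has 1/((k + 1/α_0)·√τ) ≤ α_k ≤ 2√τ/(k + 2). -/
/-- Bounds on the extrapolation weights `α_k` of the accelerated proximal gradient
method with line search in the convex case: if `η_j / η_k < τ` for all `j, k` and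
`1/α_k² − 1/α_k = (1/α_{k−1}²) · (η_{k−1}/η_k)`, then
`1/((k + 1/α₀)√τ) ≤ α_k ≤ 2√τ/(k + 2)`. -/
theorem stmt_1 (τ : ℝ) (hτ : 1 ≤ τ) (η α : ℕ → ℝ)
    (hη : ∀ k, 0 < η k) (hratio : ∀ j k, η j / η k < τ)
    (hαpos : ∀ k, 0 < α k) (hαle : ∀ k, α k ≤ 1)
    (hrec : ∀ k : ℕ,
      1 / (α (k + 1)) ^ 2 - 1 / (α (k + 1)) = 1 / (α k) ^ 2 * (η k / η (k + 1))) :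
    ∀ k : ℕ, 1 / (((k : ℝ) + 1 / α 0) * Real.sqrt τ) ≤ α k ∧
      α k ≤ 2 * Real.sqrt τ / ((k : ℝ) + 2) := by
  have hτ0 : (0:ℝ) < τ := lt_of_lt_of_le one_pos hτ
  set st := Real.sqrt τ with hst
  have hst1 : 1 ≤ st := by
    rw [hst, show (1:ℝ) = Real.sqrt 1 by simp]
    exact Real.sqrt_le_sqrt hτ
  have hst0 : (0:ℝ) < st := lt_of_lt_of_le one_pos hst1
  set s : ℕ → ℝ := fun k => Real.sqrt (η k) / α k with hs
  have hsq : ∀ k, 0 < Real.sqrt (η k) := fun k => Real.sqrt_pos.2 (hη k)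
  have hspos : ∀ k, 0 < s k := fun k => div_pos (hsq k) (hαpos k)
  have hska : ∀ k, s k * α k = Real.sqrt (η k) := fun k =>
    div_mul_cancel₀ _ (hαpos k).ne'
  have key : ∀ k, s (k+1) * (s (k+1) - Real.sqrt (η (k+1))) = (s k)^2 := by
    intro k
    have h := hrec k
    have e1 : Real.sqrt (η (k+1)) ^ 2 = η (k+1) := Real.sq_sqrt (hη (k+1)).le
    have e0 : Real.sqrt (η k) ^ 2 = η k := Real.sq_sqrt (hη k).le
    have h1 := (hαpos (k+1)).ne'
    have h0 := (hαpos k).ne'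
    have hη1 := (hη (k+1)).ne'
    simp only [hs]
    have expand : Real.sqrt (η (k+1)) / α (k+1) *
        (Real.sqrt (η (k+1)) / α (k+1) - Real.sqrt (η (k+1)))
        = η (k+1) * (1 / (α (k+1)) ^ 2 - 1 / (α (k+1))) := by
      field_simp
      linear_combination (1 - α (k+1)) * e1
    rw [expand, h]
    have : η (k + 1) * (1 / α k ^ 2 * (η k / η (k + 1))) = η k / α k ^ 2 := by
      field_simp
    rw [this, div_pow]
    rw [e0]
  have step_ub : ∀ k, s (k+1) ≤ s k + Real.sqrt (η (k+1)) := by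
    intro k
    by_contra hcon
    push_neg at hcon
    have h2 : 0 < s (k+1) - Real.sqrt (η (k+1)) := by
      have := hspos k; linarith
    nlinarith [key k, hspos k, hspos (k+1), hsq (k+1), h2]
  have step_lb : ∀ k, s k + Real.sqrt (η (k+1)) / 2 ≤ s (k+1) := by
    intro k
    by_contra hcon
    push_neg at hcon
    have he : Real.sqrt (η (k+1)) < s (k+1) := by
      nlinarith [key k, hspos k, hspos (k+1), hsq (k+1)]
    have h2 : 0 < s k + s (k+1) - Real.sqrt (η (k+1)) / 2 := by
      have := hspos k; linarith [hsq (k+1)]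
    nlinarith [key k, hcon, h2, mul_pos (hsq (k+1)) (hsq (k+1))]
  have sum_ub : ∀ k, s k ≤ s 0 + ∑ j ∈ Finset.range k, Real.sqrt (η (j+1)) := by
    intro k
    induction k with
    | zero => simp
    | succ n ih =>
      rw [Finset.sum_range_succ]
      have := step_ub n
      linarith
  have sum_lb : ∀ k, s 0 + (∑ j ∈ Finset.range k, Real.sqrt (η (j+1))) / 2 ≤ s k := by
    intro k
    induction k with
    | zero => simp
    | succ n ih =>
      rw [Finset.sum_range_succ]
      have := step_lb n
      linarith
  intro k
  have hterm_ub : ∀ j : ℕ, Real.sqrt (η j) ≤ st * Real.sqrt (η k) := by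
    intro j
    have h := (hratio j k).le
    rw [div_le_iff₀ (hη k)] at h
    calc Real.sqrt (η j) ≤ Real.sqrt (τ * η k) := Real.sqrt_le_sqrt h
      _ = st * Real.sqrt (η k) := Real.sqrt_mul hτ0.le _
  have hterm_lb : ∀ j : ℕ, Real.sqrt (η k) / st ≤ Real.sqrt (η j) := by
    intro j
    have h := (hratio k j).le
    rw [div_le_iff₀ (hη j)] at h
    rw [div_le_iff₀ hst0]
    calc Real.sqrt (η k) ≤ Real.sqrt (τ * η j) := Real.sqrt_le_sqrt h
      _ = st * Real.sqrt (η j) := Real.sqrt_mul hτ0.le _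
      _ = Real.sqrt (η j) * st := mul_comm _ _
  have Sub : ∑ j ∈ Finset.range k, Real.sqrt (η (j+1)) ≤ (k:ℝ) * (st * Real.sqrt (η k)) := by
    calc ∑ j ∈ Finset.range k, Real.sqrt (η (j+1))
        ≤ ∑ _j ∈ Finset.range k, st * Real.sqrt (η k) :=
          Finset.sum_le_sum fun j _ => hterm_ub (j+1)
      _ = (k:ℝ) * (st * Real.sqrt (η k)) := by
          rw [Finset.sum_const, Finset.card_range, nsmul_eq_mul]
  have Slb : (k:ℝ) * (Real.sqrt (η k) / st) ≤ ∑ j ∈ Finset.range k, Real.sqrt (η (j+1)) := by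
    calc (k:ℝ) * (Real.sqrt (η k) / st)
        = ∑ _j ∈ Finset.range k, Real.sqrt (η k) / st := by
          rw [Finset.sum_const, Finset.card_range, nsmul_eq_mul]
      _ ≤ ∑ j ∈ Finset.range k, Real.sqrt (η (j+1)) :=
          Finset.sum_le_sum fun j _ => hterm_lb (j+1)
  have hα0 : (1:ℝ) ≤ 1 / α 0 := one_le_one_div (hαpos 0) (hαle 0)
  have hα0pos : (0:ℝ) < 1 / α 0 := one_div_pos.2 (hαpos 0)
  have hs0_ub : s 0 ≤ (1 / α 0) * (st * Real.sqrt (η k)) := by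
    rw [hs]
    simp only
    rw [div_le_iff₀ (hαpos 0)]
    have heq : (1 / α 0) * (st * Real.sqrt (η k)) * α 0 = st * Real.sqrt (η k) := by
      field_simp
      rw [mul_div_cancel_left₀ _ (hαpos 0).ne']
    rw [heq]
    exact hterm_ub 0
  have hs0_lb : (1 / α 0) * (Real.sqrt (η k) / st) ≤ s 0 := by
    rw [hs]
    have h := hterm_lb 0
    rw [one_div, inv_mul_eq_div, div_le_div_iff₀ (hαpos 0) (hαpos 0)]
    exact mul_le_mul_of_nonneg_right h (hαpos 0).le
  constructor
  · -- lower bound on α k : s k ≤ ((k:ℝ) + 1/α 0) * st * √η k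
    have hD : (0:ℝ) < ((k:ℝ) + 1 / α 0) * st := by positivity
    have hsk_ub : s k ≤ (((k:ℝ) + 1 / α 0) * st) * Real.sqrt (η k) := by
      have := sum_ub k
      nlinarith [Sub, hs0_ub]
    rw [← hska k] at hsk_ub
    have h1 : 1 ≤ (((k:ℝ) + 1 / α 0) * st) * α k := by
      have := hspos k
      nlinarith
    rw [div_le_iff₀ hD]
    linarith
  · -- upper bound on α k : s k ≥ (k+2)/(2 st) * √η k
    have hk2 : (0:ℝ) < (k:ℝ) + 2 := by positivity
    have hsk_lb : (((k:ℝ) + 2) / (2 * st)) * Real.sqrt (η k) ≤ s k := by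
      have h1 := sum_lb k
      have h2 : ((k:ℝ) + 2) / (2 * st) * Real.sqrt (η k)
          ≤ 1 / α 0 * (Real.sqrt (η k) / st) + ((k:ℝ) * (Real.sqrt (η k) / st)) / 2 := by
        have hq : (0:ℝ) ≤ Real.sqrt (η k) / st := by positivity
        have : ((k:ℝ) + 2) / (2 * st) * Real.sqrt (η k)
            = (1 + (k:ℝ)/2) * (Real.sqrt (η k) / st) := by
          field_simp
          ring_nf
        rw [this]
        nlinarith [hq, hα0]
      nlinarith [Slb, hs0_lb]
    rw [← hska k] at hsk_lb
    have h1 : (((k:ℝ) + 2) / (2 * st)) * α k ≤ 1 := by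
      have := hspos k
      nlinarith
    rw [le_div_iff₀ hk2]
    have : ((k:ℝ) + 2) * α k ≤ 2 * st := by
      rw [div_mul_eq_mul_div, div_le_one (by positivity)] at h1
      linarith
    linarith
end

section
/- Let g be convex, differentiable and μ-strongly convex with μ ≥ 0, let H be a proper convex function, set F = g + H, and let x* be a minimizer of F with F* = F(x*). Let x, z ∈ dom H, γ > 0, α ∈ (0, 1], η > 0 and γ⁺ satisfy γ⁺ = α²/η = (1−α)γ + αμ, and set y = (αγ·z + γ⁺·x)/(αγ + γ⁺). Suppose x⁺ ∈ dom H satisfies: (i) g(x⁺) ≤ g(y) + ⟨∇g(y), x⁺ − y⟩ + (1/(2η))‖x⁺ − y‖², and (ii) there exists a vector e with ‖e‖ ≤ ε (for some ε ≥ 0) such that e − ∇g(y) − (1/η)(x⁺ − y) is a subgradient of H at x⁺. Define z⁺ = x + (1/α)(x⁺ − x). Then F(x⁺) − F* + (γ⁺/2)‖x* − z⁺‖² ≤ (1−α)·[F(x) − F* + (γ/2)‖x* − z‖²] + ε·α·‖x* − z⁺‖. -/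
open scoped RealInnerProductSpace

set_option maxHeartbeats 1000000 in
/-- One-step progress inequality of the inexact accelerated proximal gradient method:
if `g` is `μ`-strongly convex with gradient `g'`, `H` is convex, `F = g + H` is minimized
at `x*`, the parameters satisfy `γ⁺ = α²/η = (1−α)γ + αμ`,
`y = (αγ z + γ⁺ x)/(αγ + γ⁺)`, the descent condition holds at `x⁺`,
and `e − ∇g(y) − (1/η)(x⁺ − y)` is a subgradient of `H` at `x⁺` with `‖e‖ ≤ ε`,
then with `z⁺ = x + (1/α)(x⁺ − x)`:
`F(x⁺) − F* + (γ⁺/2)‖x* − z⁺‖² ≤ (1−α)[F(x) − F* + (γ/2)‖x* − z‖²] + εα‖x* − z⁺‖`. -/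
theorem stmt_2 {E : Type*} [NormedAddCommGroup E] [InnerProductSpace ℝ E]
    (g H : E → ℝ) (g' : E → E) (μ : ℝ) (hμ : 0 ≤ μ)
    (hg : ∀ u v : E, g v + ⟪g' v, u - v⟫ + μ / 2 * ‖u - v‖ ^ 2 ≤ g u)
    (hH : ConvexOn ℝ Set.univ H)
    (xstar : E) (hxstar : ∀ u : E, g xstar + H xstar ≤ g u + H u)
    (x z : E) (γ α η γplus ε : ℝ)
    (hγ : 0 < γ) (hα : 0 < α) (hα1 : α ≤ 1) (hη : 0 < η) (hε : 0 ≤ ε)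
    (hγplus1 : γplus = α ^ 2 / η) (hγplus2 : γplus = (1 - α) * γ + α * μ)
    (y : E) (hy : y = (α * γ + γplus)⁻¹ • ((α * γ) • z + γplus • x))
    (xplus : E)
    (hdescent : g xplus ≤ g y + ⟪g' y, xplus - y⟫ + 1 / (2 * η) * ‖xplus - y‖ ^ 2)
    (e : E) (he : ‖e‖ ≤ ε)
    (hsub : ∀ u : E,
      H xplus + ⟪e - g' y - (1 / η) • (xplus - y), u - xplus⟫ ≤ H u)
    (zplus : E) (hzplus : zplus = x + (1 / α) • (xplus - x)) :
    g xplus + H xplus - (g xstar + H xstar) + γplus / 2 * ‖xstar - zplus‖ ^ 2 ≤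
      (1 - α) * (g x + H x - (g xstar + H xstar) + γ / 2 * ‖xstar - z‖ ^ 2) +
        ε * α * ‖xstar - zplus‖ := by
  have hα0 : (α : ℝ) ≠ 0 := hα.ne'
  have hγp : 0 < γplus := by rw [hγplus1]; positivity
  have hs : 0 < α * γ + γplus := by positivity
  have hη2 : γplus * η = α ^ 2 := by rw [hγplus1]; field_simp
  -- x⁺ as convex combination of x and z⁺
  have hxp : xplus = (1 - α) • x + α • zplus := by
    have h1 : α • (zplus - x) = xplus - x := by
      rw [hzplus, add_sub_cancel_left, smul_smul]
      rw [show α * (1 / α) = 1 by field_simp, one_smul]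
    have h2 : (1 - α) • x + α • zplus = x + α • (zplus - x) := by module
    rw [h2, h1]; abel
  set u : E := (1 - α) • x + α • xstar with hu
  have hux : u - xplus = α • (xstar - zplus) := by rw [hu, hxp]; module
  have hxpu : xplus - u = α • (zplus - xstar) := by rw [hu, hxp]; module
  -- subgradient inequality at u, inner product expanded
  have hsubu := hsub u
  have hinner : ⟪e - g' y - (1 / η) • (xplus - y), u - xplus⟫
      = ⟪e, u - xplus⟫ - ⟪g' y, u - xplus⟫ - (1 / η) * ⟪xplus - y, u - xplus⟫ := by
    simp [inner_sub_left, real_inner_smul_left]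
  rw [hinner] at hsubu
  -- three-point identity
  have hnorm : ‖u - y‖ ^ 2
      = ‖u - xplus‖ ^ 2 + 2 * ⟪u - xplus, xplus - y⟫ + ‖xplus - y‖ ^ 2 := by
    have h3 : u - y = (u - xplus) + (xplus - y) := by abel
    rw [h3, norm_add_sq_real]
  have hinnc : ⟪xplus - y, u - xplus⟫ = ⟪u - xplus, xplus - y⟫ := real_inner_comm _ _
  have hnux : ‖u - xplus‖ ^ 2 = α ^ 2 * ‖xstar - zplus‖ ^ 2 := by
    rw [hux, norm_smul, mul_pow, Real.norm_eq_abs, sq_abs]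
  have hη3 : 1 / (2 * η) * α ^ 2 = γplus / 2 := by
    rw [← hη2]; field_simp
  have hkey2 : 1 / (2 * η) * ‖xplus - y‖ ^ 2 + (1 / η) * ⟪xplus - y, u - xplus⟫
      = 1 / (2 * η) * ‖u - y‖ ^ 2 - γplus / 2 * ‖xstar - zplus‖ ^ 2 := by
    rw [hinnc, hnorm, hnux, ← hη3]; field_simp; ring
  -- convexity of H
  have hHu : H u ≤ (1 - α) * H x + α * H xstar :=
    hH.2 (Set.mem_univ x) (Set.mem_univ xstar) (by linarith) hα.le (by ring)
  -- g bounds from (strong) convexity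
  have hgx : g y + ⟪g' y, x - y⟫ ≤ g x := by
    have h := hg x y
    have h0 : 0 ≤ μ / 2 * ‖x - y‖ ^ 2 := by positivity
    linarith
  have hgs : g y + ⟪g' y, xstar - y⟫ + μ / 2 * ‖xstar - y‖ ^ 2 ≤ g xstar := hg xstar y
  have huy : u - y = (1 - α) • (x - y) + α • (xstar - y) := by rw [hu]; module
  have hinner2 : ⟪g' y, u - y⟫
      = (1 - α) * ⟪g' y, x - y⟫ + α * ⟪g' y, xstar - y⟫ := by
    rw [huy]; simp [inner_add_right, real_inner_smul_right]
  -- Cauchy-Schwarz on error term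
  have hcs : ⟪e, xplus - u⟫ ≤ ε * α * ‖xstar - zplus‖ := by
    rw [hxpu, real_inner_smul_right]
    have h1 : ⟪e, zplus - xstar⟫ ≤ ‖e‖ * ‖zplus - xstar‖ := real_inner_le_norm _ _
    have h2 : ‖zplus - xstar‖ = ‖xstar - zplus‖ := norm_sub_rev _ _
    have h3 : (0:ℝ) ≤ ‖xstar - zplus‖ := norm_nonneg _
    have h4 : ⟪e, zplus - xstar⟫ ≤ ε * ‖xstar - zplus‖ := by
      calc ⟪e, zplus - xstar⟫ ≤ ‖e‖ * ‖zplus - xstar‖ := h1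
        _ = ‖e‖ * ‖xstar - zplus‖ := by rw [h2]
        _ ≤ ε * ‖xstar - zplus‖ := mul_le_mul_of_nonneg_right he h3
    have h5 := mul_le_mul_of_nonneg_left h4 hα.le
    linarith
  -- geometry of y
  set a : E := xstar - x with ha
  set b : E := z - x with hb
  set c : ℝ := γ * α / (α * γ + γplus) with hc
  have hyx : y - x = c • b := by
    have h3 : (α * γ + γplus) • y = (α * γ) • z + γplus • x := by
      rw [hy, smul_inv_smul₀ hs.ne']
    have h4 : (α * γ + γplus) • (y - x) = (α * γ) • b := by
      rw [smul_sub, h3, hb]; module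
    calc y - x = (α * γ + γplus)⁻¹ • ((α * γ + γplus) • (y - x)) :=
          (inv_smul_smul₀ hs.ne' _).symm
      _ = (α * γ + γplus)⁻¹ • ((α * γ) • b) := by rw [h4]
      _ = c • b := by rw [smul_smul, hc]; congr 1; field_simp
  have huy2 : u - y = α • a - c • b := by
    have h4 : u - y = α • a - (y - x) := by rw [hu, ha]; module
    rw [h4, hyx]
  have hsy : xstar - y = a - c • b := by
    have h4 : xstar - y = a - (y - x) := by rw [ha]; abel
    rw [h4, hyx]
  have hsz : xstar - z = a - b := by rw [ha, hb]; abel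
  -- norm expansions
  have e1 : ‖α • a - c • b‖ ^ 2
      = α ^ 2 * ‖a‖ ^ 2 - 2 * (α * c) * ⟪a, b⟫ + c ^ 2 * ‖b‖ ^ 2 := by
    rw [norm_sub_sq_real, norm_smul, norm_smul, real_inner_smul_left,
      real_inner_smul_right]
    simp only [Real.norm_eq_abs, mul_pow, sq_abs]
    ring
  have e2 : ‖a - c • b‖ ^ 2 = ‖a‖ ^ 2 - 2 * c * ⟪a, b⟫ + c ^ 2 * ‖b‖ ^ 2 := by
    rw [norm_sub_sq_real, norm_smul, real_inner_smul_right]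
    simp only [Real.norm_eq_abs, mul_pow, sq_abs]
    ring
  have e3 : ‖a - b‖ ^ 2 = ‖a‖ ^ 2 - 2 * ⟪a, b⟫ + ‖b‖ ^ 2 := by
    rw [norm_sub_sq_real]
  -- key scalar inequality
  have hηv : 1 / (2 * η) = γplus / (2 * α ^ 2) := by
    rw [hγplus1]; field_simp
  have hcs2 : c * (α * γ + γplus) = γ * α := by rw [hc]; field_simp
  have hid : γplus - α ^ 2 * μ = (1 - α) * (α * γ + γplus) := by
    rw [hγplus2]; ring
  have cA : 1 / (2 * η) * α ^ 2 - α * μ / 2 = (1 - α) * γ / 2 := by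
    rw [hη3, hγplus2]; ring
  have cC : 1 / (2 * η) * (α * c) - α * μ / 2 * c = (1 - α) * γ / 2 := by
    have h5 : c * (γplus - α ^ 2 * μ) = (1 - α) * (γ * α) := by
      rw [hid, mul_left_comm, hcs2]
    rw [hηv]
    clear_value c
    field_simp
    linear_combination h5
  have cB : 1 / (2 * η) * c ^ 2 - α * μ / 2 * c ^ 2 ≤ (1 - α) * γ / 2 := by
    have h8 : (1 - α) * (α * γ + γplus) ^ 2 - γ * (γplus - α ^ 3 * μ)
        = γplus * α * (1 - α) * μ := by rw [hγplus2]; ring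
    have h8' : γ * (γplus - α ^ 3 * μ) ≤ (1 - α) * (α * γ + γplus) ^ 2 := by
      linarith [h8, mul_nonneg (mul_nonneg (mul_nonneg hγp.le hα.le)
        (by linarith : (0:ℝ) ≤ 1 - α)) hμ]
    have hc2 : c ^ 2 = γ ^ 2 * α ^ 2 / (α * γ + γplus) ^ 2 := by
      rw [hc, div_pow]; ring_nf
    have h10 : c ^ 2 * (γplus - α ^ 3 * μ) ≤ (1 - α) * γ * α ^ 2 := by
      rw [hc2, div_mul_eq_mul_div, div_le_iff₀ (by positivity)]
      linarith [mul_le_mul_of_nonneg_left h8' (show (0:ℝ) ≤ γ * α ^ 2 by positivity)]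
    have e4 : 1 / (2 * η) * c ^ 2 - α * μ / 2 * c ^ 2
        = c ^ 2 * (γplus - α ^ 3 * μ) / (2 * α ^ 2) := by
      rw [hηv]; field_simp
    have e5 : (1 - α) * γ / 2 = (1 - α) * γ * α ^ 2 / (2 * α ^ 2) := by
      field_simp
    rw [e4, e5]
    exact (div_le_div_iff_of_pos_right (by positivity)).mpr h10
  have key : 1 / (2 * η) * ‖u - y‖ ^ 2 - α * μ / 2 * ‖xstar - y‖ ^ 2
      ≤ (1 - α) * γ / 2 * ‖xstar - z‖ ^ 2 := by
    rw [huy2, hsy, hsz, e1, e2, e3]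
    have hB : (0:ℝ) ≤ ‖b‖ ^ 2 := by positivity
    have kA : (1 / (2 * η) * α ^ 2 - α * μ / 2) * ‖a‖ ^ 2
        = ((1 - α) * γ / 2) * ‖a‖ ^ 2 := by rw [cA]
    have kC : (1 / (2 * η) * (α * c) - α * μ / 2 * c) * ⟪a, b⟫
        = ((1 - α) * γ / 2) * ⟪a, b⟫ := by rw [cC]
    have kB : (1 / (2 * η) * c ^ 2 - α * μ / 2 * c ^ 2) * ‖b‖ ^ 2
        ≤ ((1 - α) * γ / 2) * ‖b‖ ^ 2 := mul_le_mul_of_nonneg_right cB hB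
    linarith [kA, kC, kB]
  -- assemble
  have hsplit : ⟪g' y, xplus - y⟫ + ⟪g' y, u - xplus⟫ = ⟪g' y, u - y⟫ := by
    rw [← inner_add_right]; congr 1; abel
  have hF1 : (1 - α) * (g y + ⟪g' y, x - y⟫) ≤ (1 - α) * g x :=
    mul_le_mul_of_nonneg_left hgx (by linarith)
  have hF2 : α * (g y + ⟪g' y, xstar - y⟫ + μ / 2 * ‖xstar - y‖ ^ 2) ≤ α * g xstar :=
    mul_le_mul_of_nonneg_left hgs hα.le
  have hei : ⟪e, u - xplus⟫ = - ⟪e, xplus - u⟫ := by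
    rw [← inner_neg_right]; congr 1; abel
  linarith [hsubu, hdescent, hkey2, hHu, hinner2, hcs, key, hF1, hF2,
    hinnc, hsplit, hei]
end

section
/- Let F attain its minimum value F* at x*, and let (x^k)_{k≥0}, (z^k)_{k≥0} be sequences with F(x^k) ≥ F* for all k. Let L̲ > 0 and κ ≥ 1, and let α_k ∈ [1/√κ, 1], η_k ∈ (0, 1/L̲], γ_k ≥ 0 with γ_{k+1} = α_k²/η_k, and ε_k ≥ 0 for all k ≥ 0. Assume that for every k ≥ 0: F(x^{k+1}) − F* + (γ_{k+1}/2)‖x* − z^{k+1}‖² ≤ (1−α_k)·[F(x^k) − F* + (γ_k/2)‖x* − z^k‖²] + ε_k·α_k·‖x* − z^{k+1}‖. Fix c ∈ [0, 1) and define ψ_k = F(x^k) − F* + (1 − (1−c)α_k)·(γ_k/2)·‖x* − z^k‖². Then for every k ≥ 0: ψ_{k+1} ≤ [∏_{j=0}^{k}(1 − cα_j)]·(ψ_0 + (√κ/(2(1−c)²·L̲))·Σ_{t=0}^{k} ε_t²/∏_{j=0}^{t−1}(1 − cα_j)), where an empty product equals 1. -/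
/-- Auxiliary recursion-unrolling lemma. -/
lemma apg_aux (ψ q d : ℕ → ℝ) (hd : ∀ j, 0 < d j)
    (key : ∀ k, ψ (k + 1) ≤ d k * (ψ k + q k)) :
    ∀ k : ℕ, ψ (k + 1) ≤ (∏ j ∈ Finset.range (k + 1), d j) *
      (ψ 0 + ∑ t ∈ Finset.range (k + 1), q t / ∏ j ∈ Finset.range t, d j) := by
  intro k
  induction k with
  | zero =>
    have h := key 0
    simp only [Finset.prod_range_one, Finset.sum_range_one, Finset.range_zero,
      Finset.prod_empty, div_one, zero_add]
    exact h
  | succ n ih =>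
    have hP : 0 < ∏ j ∈ Finset.range (n + 1), d j :=
      Finset.prod_pos (fun j _ => hd j)
    calc ψ (n + 2) ≤ d (n + 1) * (ψ (n + 1) + q (n + 1)) := key (n + 1)
      _ ≤ d (n + 1) * ((∏ j ∈ Finset.range (n + 1), d j) *
            (ψ 0 + ∑ t ∈ Finset.range (n + 1), q t / ∏ j ∈ Finset.range t, d j)
            + q (n + 1)) := by
          apply mul_le_mul_of_nonneg_left (by linarith) (le_of_lt (hd (n + 1)))
      _ = (∏ j ∈ Finset.range (n + 2), d j) *
          (ψ 0 + ∑ t ∈ Finset.range (n + 2), q t / ∏ j ∈ Finset.range t, d j) := by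
          have hexp : ∀ A S u : ℝ,
              (∏ j ∈ Finset.range (n + 1), d j) * d (n + 1) *
                (A + (S + u / ∏ j ∈ Finset.range (n + 1), d j)) =
              d (n + 1) * ((∏ j ∈ Finset.range (n + 1), d j) * (A + S) + u) := by
            intro A S u
            field_simp
            ring
          conv_rhs => rw [Finset.prod_range_succ, Finset.sum_range_succ]
          exact (hexp (ψ 0) _ (q (n + 1))).symm

set_option maxHeartbeats 1000000 in
/-- Accumulated progress inequality of the inexact APG method in the strongly convex case:
if the per-step inequality holds with `α_k ∈ [1/√κ, 1]`, `η_k ∈ (0, 1/L̲]`,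
`γ_{k+1} = α_k²/η_k`, then with `ψ_k = F(x^k) − F* + (1 − (1−c)α_k)(γ_k/2)‖x* − z^k‖²`,
`ψ_{k+1} ≤ ∏_{j≤k}(1 − cα_j) (ψ₀ + (√κ/(2(1−c)²L̲)) Σ_{t≤k} ε_t²/∏_{j<t}(1 − cα_j))`. -/
theorem stmt_3 {E : Type*} [NormedAddCommGroup E]
    (F : E → ℝ) (xstar : E) (hmin : ∀ u, F xstar ≤ F u)
    (x z : ℕ → E) (hFk : ∀ k, F xstar ≤ F (x k))
    (Lb κ : ℝ) (hLb : 0 < Lb) (hκ : 1 ≤ κ)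
    (α η γ ε : ℕ → ℝ)
    (hαlow : ∀ k, 1 / Real.sqrt κ ≤ α k) (hαup : ∀ k, α k ≤ 1)
    (hηpos : ∀ k, 0 < η k) (hηup : ∀ k, η k ≤ 1 / Lb)
    (hγ : ∀ k, 0 ≤ γ k) (hγrec : ∀ k, γ (k + 1) = (α k) ^ 2 / η k)
    (hε : ∀ k, 0 ≤ ε k)
    (hstep : ∀ k : ℕ,
      F (x (k + 1)) - F xstar + γ (k + 1) / 2 * ‖xstar - z (k + 1)‖ ^ 2 ≤
        (1 - α k) * (F (x k) - F xstar + γ k / 2 * ‖xstar - z k‖ ^ 2) +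
          ε k * α k * ‖xstar - z (k + 1)‖)
    (c : ℝ) (hc0 : 0 ≤ c) (hc1 : c < 1) :
    ∀ k : ℕ,
      F (x (k + 1)) - F xstar +
          (1 - (1 - c) * α (k + 1)) * (γ (k + 1) / 2) * ‖xstar - z (k + 1)‖ ^ 2 ≤
        (∏ j ∈ Finset.range (k + 1), (1 - c * α j)) *
          ((F (x 0) - F xstar + (1 - (1 - c) * α 0) * (γ 0 / 2) * ‖xstar - z 0‖ ^ 2) +
            Real.sqrt κ / (2 * (1 - c) ^ 2 * Lb) *
              ∑ t ∈ Finset.range (k + 1),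
                (ε t) ^ 2 / ∏ j ∈ Finset.range t, (1 - c * α j)) := by
  have hκ0 : (0:ℝ) ≤ κ := by linarith
  set s : ℝ := Real.sqrt κ with hs_def
  have hs1 : 1 ≤ s := by
    have h := Real.sqrt_le_sqrt hκ
    rwa [Real.sqrt_one] at h
  have hspos : (0:ℝ) < s := lt_of_lt_of_le one_pos hs1
  have h1c : (0:ℝ) < 1 - c := by linarith
  have hαpos : ∀ j, 0 < α j := fun j =>
    lt_of_lt_of_le (div_pos one_pos hspos) (hαlow j)
  have hd : ∀ j, 0 < 1 - c * α j := by
    intro j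
    nlinarith [hαup j, hαpos j]
  set C : ℝ := s / (2 * (1 - c) ^ 2 * Lb) with hC_def
  set ψ : ℕ → ℝ := fun n =>
    F (x n) - F xstar + (1 - (1 - c) * α n) * (γ n / 2) * ‖xstar - z n‖ ^ 2 with hψ_def
  clear_value s C ψ
  have key : ∀ k, ψ (k + 1) ≤ (1 - c * α k) * (ψ k + C * ε k ^ 2) := by
    intro k
    have hγ1 : 0 < γ (k + 1) := by
      rw [hγrec k]
      exact div_pos (pow_pos (hαpos k) 2) (hηpos k)
    set B : ℝ := (1 - c) * α (k + 1) * (γ (k + 1) / 2) with hB_def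
    have hB : 0 < B := by
      rw [hB_def]
      apply mul_pos (mul_pos h1c (hαpos (k + 1)))
      linarith
    set T : ℝ := (1 - c * α k) * (C * ε k ^ 2) with hT_def
    clear_value B T
    -- (ε_k α_k)^2 ≤ 4 B T
    have h1 : 1 ≤ α (k + 1) * s := by
      have := hαlow (k + 1)
      rwa [div_le_iff₀ hspos] at this
    have h2 : η k * Lb ≤ 1 := by
      have := hηup k
      rwa [le_div_iff₀ hLb] at this
    have h44 : (ε k * α k) ^ 2 ≤ 4 * B * T := by
      have hQ : 1 ≤ (α (k + 1) * s * (1 - c * α k)) / ((1 - c) * Lb * η k) := by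
        rw [le_div_iff₀ (mul_pos (mul_pos h1c hLb) (hηpos k))]
        have hca : 1 - c ≤ 1 - c * α k := by nlinarith [hαup k, hαpos k]
        nlinarith [mul_pos (hηpos k) hLb, hd k, hαpos (k + 1)]
      have heq : 4 * B * T =
          (ε k ^ 2 * α k ^ 2) *
            ((α (k + 1) * s * (1 - c * α k)) / ((1 - c) * Lb * η k)) := by
        rw [hB_def, hT_def, hC_def, hγrec k]
        field_simp [h1c.ne', hLb.ne', (hηpos k).ne']
        ring
      rw [heq]
      nlinarith [sq_nonneg (ε k * α k), mul_nonneg (sq_nonneg (ε k)) (sq_nonneg (α k))]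
    have hquad : ε k * α k * ‖xstar - z (k + 1)‖ ≤
        B * ‖xstar - z (k + 1)‖ ^ 2 + T := by
      nlinarith [sq_nonneg (2 * B * ‖xstar - z (k + 1)‖ - ε k * α k), hB, h44]
    have hstepk := hstep k
    have hF : 0 ≤ F (x k) - F xstar := sub_nonneg.2 (hFk k)
    have hq : 0 ≤ γ k / 2 * ‖xstar - z k‖ ^ 2 := by
      have := hγ k
      positivity
    simp only [hψ_def]
    have hA : (1 - α k) * (F (x k) - F xstar) ≤ (1 - c * α k) * (F (x k) - F xstar) :=
      mul_le_mul_of_nonneg_right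
        (by have := mul_le_of_le_one_left (hαpos k).le hc1.le; linarith) hF
    have hB2 : (1 - α k) * (γ k / 2 * ‖xstar - z k‖ ^ 2) ≤
        (1 - c * α k) * (1 - (1 - c) * α k) * (γ k / 2 * ‖xstar - z k‖ ^ 2) :=
      mul_le_mul_of_nonneg_right
        (by
          have h := mul_nonneg (mul_nonneg hc0 h1c.le) (sq_nonneg (α k))
          nlinarith [h]) hq
    have hBr : B * ‖xstar - z (k + 1)‖ ^ 2 =
        (1 - c) * α (k + 1) * (γ (k + 1) / 2) * ‖xstar - z (k + 1)‖ ^ 2 := by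
      rw [hB_def]
    linarith [hstepk, hquad, hA, hB2, hBr, hT_def.le, hT_def.ge]
  have main := apg_aux ψ (fun t => C * ε t ^ 2) (fun j => 1 - c * α j) hd key
  intro k
  have hmk := main k
  have hsum : ∑ t ∈ Finset.range (k + 1),
      (C * ε t ^ 2) / ∏ j ∈ Finset.range t, (1 - c * α j) =
      C * ∑ t ∈ Finset.range (k + 1),
        ε t ^ 2 / ∏ j ∈ Finset.range t, (1 - c * α j) := by
    rw [Finset.mul_sum]
    simp only [mul_div_assoc]
  rw [hsum] at hmk
  simp only [hψ_def] at hmk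
  exact hmk
end

section
/- Let (u_k)_{k≥1} be a sequence of nonnegative real numbers, C ≥ 0 a constant, and (λ_i)_{i≥1} nonnegative reals. Suppose u_k² ≤ C + Σ_{i=1}^{k} λ_i·u_i for all k ≥ 1. Then u_k ≤ Σ_{i=1}^{k} λ_i + √C for all k ≥ 1. -/
/-- Technical lemma on nonnegative sequences: if `u_k² ≤ C + Σ_{i=1}^k λ_i u_i` for all
`k ≥ 1`, with `C ≥ 0` and `λ_i ≥ 0`, then `u_k ≤ Σ_{i=1}^k λ_i + √C` for all `k ≥ 1`. -/
theorem stmt_7 (u lam : ℕ → ℝ) (C : ℝ) (hC : 0 ≤ C)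
    (hu : ∀ k : ℕ, 1 ≤ k → 0 ≤ u k) (hlam : ∀ i : ℕ, 1 ≤ i → 0 ≤ lam i)
    (h : ∀ k : ℕ, 1 ≤ k → (u k) ^ 2 ≤ C + ∑ i ∈ Finset.Icc 1 k, lam i * u i) :
    ∀ k : ℕ, 1 ≤ k → u k ≤ ∑ i ∈ Finset.Icc 1 k, lam i + Real.sqrt C := by
  intro k hk
  have hne : (Finset.Icc 1 k).Nonempty := ⟨1, by simp [hk]⟩
  obtain ⟨j, hjmem, hjmax⟩ := Finset.exists_max_image (Finset.Icc 1 k) u hne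
  obtain ⟨hj1, hjk⟩ := Finset.mem_Icc.mp hjmem
  set S : ℝ := ∑ i ∈ Finset.Icc 1 k, lam i with hS
  have hSnn : 0 ≤ S := Finset.sum_nonneg fun i hi =>
    hlam i (Finset.mem_Icc.mp hi).1
  have hsub : Finset.Icc 1 j ⊆ Finset.Icc 1 k := by
    intro x hx
    rcases Finset.mem_Icc.mp hx with ⟨h1, h2⟩
    exact Finset.mem_Icc.mpr ⟨h1, h2.trans hjk⟩
  have hujnn : 0 ≤ u j := hu j hj1
  have key : (u j) ^ 2 ≤ C + S * u j := by
    refine (h j hj1).trans ?_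
    have h1 : ∑ i ∈ Finset.Icc 1 j, lam i * u i ≤ ∑ i ∈ Finset.Icc 1 j, lam i * u j := by
      refine Finset.sum_le_sum fun i hi => ?_
      have hi1 := (Finset.mem_Icc.mp hi).1
      exact mul_le_mul_of_nonneg_left (hjmax i (hsub hi)) (hlam i hi1)
    have h2 : ∑ i ∈ Finset.Icc 1 j, lam i * u j ≤ S * u j := by
      rw [← Finset.sum_mul]
      exact mul_le_mul_of_nonneg_right
        (Finset.sum_le_sum_of_subset_of_nonneg hsub fun i hi _ =>
          hlam i (Finset.mem_Icc.mp hi).1) hujnn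
    linarith
  have hsC : Real.sqrt C * Real.sqrt C = C := Real.mul_self_sqrt hC
  have hsCnn : 0 ≤ Real.sqrt C := Real.sqrt_nonneg C
  have huj : u j ≤ S + Real.sqrt C := by
    by_contra hcon
    push_neg at hcon
    have hujpos : 0 < u j := lt_of_le_of_lt (by positivity) hcon
    nlinarith [mul_pos hujpos hujpos]
  exact (hjmax k (Finset.mem_Icc.mpr ⟨hk, le_refl k⟩)).trans huj
end

section
/- Let F attain its minimum value F* at a point x*, and suppose the sequences (x^k)_{k≥0}, (z^k)_{k≥0} satisfy F(x^k) ≥ F* for all k. Let γ_0 > 0, α_k ∈ (0,1), η_k > 0 and ε_k ≥ 0 satisfy γ_{k+1} = α_k²/η_k = (1−α_k)γ_k for all k ≥ 0, and define φ_k = F(x^k) − F* + (γ_k/2)‖x* − z^k‖². Assume for every k ≥ 0 that φ_{k+1} ≤ (1−α_k)·φ_k + ε_k·α_k·‖x* − z^{k+1}‖. Then for every k ≥ 0: ‖x* − z^{k+1}‖ ≤ 2·Σ_{t=0}^{k} (η_t·ε_t/α_t) + √((2η_0(1−α_0)/α_0²)·φ_0). -/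
lemma key_quad (w c u : ℝ) (hw : 0 ≤ w) (hc : 0 ≤ c) (hu : 0 ≤ u)
    (h : w ^ 2 / 2 ≤ u + c * w) : w ≤ 2 * c + Real.sqrt (2 * u) := by
  set s := Real.sqrt (2 * u) with hs
  have hs0 : 0 ≤ s := Real.sqrt_nonneg _
  have hs2 : s ^ 2 = 2 * u := Real.sq_sqrt (by linarith)
  rcases le_or_gt w s with h' | h'
  · linarith
  · nlinarith [mul_nonneg hc hs0, mul_nonneg hc hw]

/-- Bound on the iterate distances of the inexact APG method in the merely convex case:
with `φ_k = F(x^k) − F* + (γ_k/2)‖x* − z^k‖²`, `γ_{k+1} = α_k²/η_k = (1−α_k)γ_k` and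
`φ_{k+1} ≤ (1−α_k)φ_k + ε_k α_k ‖x* − z^{k+1}‖`, one has
`‖x* − z^{k+1}‖ ≤ 2 Σ_{t≤k} η_t ε_t/α_t + √((2η₀(1−α₀)/α₀²) φ₀)`. -/
theorem stmt_8 {E : Type*} [NormedAddCommGroup E]
    (F : E → ℝ) (xstar : E) (hmin : ∀ u, F xstar ≤ F u)
    (x z : ℕ → E) (hFk : ∀ k, F xstar ≤ F (x k))
    (γ α η ε : ℕ → ℝ) (hγ0 : 0 < γ 0)
    (hαpos : ∀ k, 0 < α k) (hαlt : ∀ k, α k < 1)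
    (hηpos : ∀ k, 0 < η k) (hε : ∀ k, 0 ≤ ε k)
    (hγrec1 : ∀ k, γ (k + 1) = (α k) ^ 2 / η k)
    (hγrec2 : ∀ k, γ (k + 1) = (1 - α k) * γ k)
    (hstep : ∀ k : ℕ,
      F (x (k + 1)) - F xstar + γ (k + 1) / 2 * ‖xstar - z (k + 1)‖ ^ 2 ≤
        (1 - α k) * (F (x k) - F xstar + γ k / 2 * ‖xstar - z k‖ ^ 2) +
          ε k * α k * ‖xstar - z (k + 1)‖) :
    ∀ k : ℕ,
      ‖xstar - z (k + 1)‖ ≤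
        2 * ∑ t ∈ Finset.range (k + 1), η t * ε t / α t +
          Real.sqrt (2 * η 0 * (1 - α 0) / (α 0) ^ 2 *
            (F (x 0) - F xstar + γ 0 / 2 * ‖xstar - z 0‖ ^ 2)) := by
  have hγpos : ∀ k, 0 < γ k := by
    intro k
    induction k with
    | zero => exact hγ0
    | succ n ih => rw [hγrec2 n]; exact mul_pos (by linarith [hαlt n]) ih
  set φ : ℕ → ℝ := fun k => F (x k) - F xstar + γ k / 2 * ‖xstar - z k‖ ^ 2 with hφdef
  have hφ0 : ∀ k, 0 ≤ φ k := by
    intro k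
    have h1 := hFk k
    have h2 : 0 ≤ γ k / 2 * ‖xstar - z k‖ ^ 2 :=
      mul_nonneg (by linarith [hγpos k]) (sq_nonneg _)
    simp only [hφdef]
    linarith
  set u : ℕ → ℝ := fun k => φ k / γ k with hudef
  have hu0 : ∀ k, 0 ≤ u k := fun k => div_nonneg (hφ0 k) (hγpos k).le
  set c : ℕ → ℝ := fun k => η k * ε k / α k with hcdef
  have hc0 : ∀ k, 0 ≤ c k := fun k =>
    div_nonneg (mul_nonneg (hηpos k).le (hε k)) (hαpos k).le
  -- w² ≤ 2 u (k+1)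
  have hw2 : ∀ k, ‖xstar - z (k + 1)‖ ^ 2 ≤ 2 * u (k + 1) := by
    intro k
    have h1 : γ (k + 1) / 2 * ‖xstar - z (k + 1)‖ ^ 2 ≤ φ (k + 1) := by
      have := hFk (k + 1); simp only [hφdef]; linarith
    have hg := hγpos (k + 1)
    have hkey : 2 * u (k + 1) - ‖xstar - z (k + 1)‖ ^ 2 =
        (2 / γ (k + 1)) * (φ (k + 1) - γ (k + 1) / 2 * ‖xstar - z (k + 1)‖ ^ 2) := by
      simp only [hudef]; field_simp
    have hnn : 0 ≤ (2 / γ (k + 1)) *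
        (φ (k + 1) - γ (k + 1) / 2 * ‖xstar - z (k + 1)‖ ^ 2) :=
      mul_nonneg (by positivity) (by linarith)
    linarith
  -- u step
  have hustep : ∀ k, u (k + 1) ≤ u k + c k * ‖xstar - z (k + 1)‖ := by
    intro k
    have hg := hγpos (k + 1)
    have hgk := hγpos k
    have hα := hαpos k
    have hη := hηpos k
    have hs := hstep k
    have hkey : φ (k + 1) ≤ (1 - α k) * φ k + ε k * α k * ‖xstar - z (k + 1)‖ := hs
    rw [hudef]
    rw [div_le_iff₀ hg] at *
    have e1 : (1 - α k) * φ k = φ k / γ k * γ (k + 1) := by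
      rw [hγrec2 k]; field_simp
    have e2 : ε k * α k = c k * γ (k + 1) := by
      rw [hcdef, hγrec1 k]; field_simp
    calc φ (k + 1) ≤ (1 - α k) * φ k + ε k * α k * ‖xstar - z (k + 1)‖ := hkey
      _ = (φ k / γ k + c k * ‖xstar - z (k + 1)‖) * γ (k + 1) := by
          rw [e1, e2]; ring
  -- main induction
  have hbound : ∀ k, Real.sqrt (2 * u k) ≤
      2 * ∑ t ∈ Finset.range k, c t + Real.sqrt (2 * u 0) := by
    intro k
    induction k with
    | zero => simp
    | succ n ih =>
      set W := Real.sqrt (2 * u (n + 1)) with hW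
      have hW0 : 0 ≤ W := Real.sqrt_nonneg _
      have hW2 : W ^ 2 = 2 * u (n + 1) := Real.sq_sqrt (by linarith [hu0 (n + 1)])
      have hwW : ‖xstar - z (n + 1)‖ ≤ W := by
        have := hw2 n
        nlinarith [norm_nonneg (xstar - z (n + 1))]
      have hq : W ^ 2 / 2 ≤ u n + c n * W := by
        have h1 := hustep n
        have h2 : c n * ‖xstar - z (n + 1)‖ ≤ c n * W :=
          mul_le_mul_of_nonneg_left hwW (hc0 n)
        nlinarith
      have := key_quad W (c n) (u n) hW0 (hc0 n) (hu0 n) hq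
      rw [Finset.sum_range_succ]
      linarith
  intro k
  have hwW : ‖xstar - z (k + 1)‖ ≤ Real.sqrt (2 * u (k + 1)) := by
    have h2 := hw2 k
    have hW2 : Real.sqrt (2 * u (k + 1)) ^ 2 = 2 * u (k + 1) :=
      Real.sq_sqrt (by linarith [hu0 (k + 1)])
    nlinarith [norm_nonneg (xstar - z (k + 1)), Real.sqrt_nonneg (2 * u (k + 1))]
  have hu0eq : 2 * u 0 = 2 * η 0 * (1 - α 0) / (α 0) ^ 2 *
      (F (x 0) - F xstar + γ 0 / 2 * ‖xstar - z 0‖ ^ 2) := by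
    have hrel : (α 0) ^ 2 / η 0 = (1 - α 0) * γ 0 := (hγrec1 0).symm.trans (hγrec2 0)
    have hα0 := hαpos 0
    have hη0 := hηpos 0
    have h1α : (0:ℝ) < 1 - α 0 := by linarith [hαlt 0]
    have hne1 : (1 - α 0) ≠ 0 := ne_of_gt h1α
    have hneγ : γ 0 ≠ 0 := ne_of_gt hγ0
    have hneη : η 0 ≠ 0 := ne_of_gt hη0
    have hrel' : (α 0) ^ 2 = (1 - α 0) * γ 0 * η 0 := by
      field_simp at hrel; linarith
    have hcoef : 2 * η 0 * (1 - α 0) / (α 0) ^ 2 = 2 / γ 0 := by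
      rw [hrel']; field_simp
    simp only [hudef, hφdef]
    rw [hcoef]; ring
  calc ‖xstar - z (k + 1)‖ ≤ Real.sqrt (2 * u (k + 1)) := hwW
    _ ≤ 2 * ∑ t ∈ Finset.range (k + 1), c t + Real.sqrt (2 * u 0) := hbound (k + 1)
    _ = 2 * ∑ t ∈ Finset.range (k + 1), η t * ε t / α t +
          Real.sqrt (2 * η 0 * (1 - α 0) / (α 0) ^ 2 *
            (F (x 0) - F xstar + γ 0 / 2 * ‖xstar - z 0‖ ^ 2)) := by
      rw [hu0eq]
end

section
/- Let (x*, λ*) be a KKT pair of the affine-constrained problem. Let x^(k) ∈ ℝ^n, λ^(k) = [λ_E^(k); λ_I^(k)], β_k > 0, ρ_k > 0 and ε̄_k ≥ 0, and suppose x^(k+1) satisfies the ε̄_k-stationarity condition: there exists v with ‖v‖ ≤ ε̄_k such that v − A_E^⊤λ_E^(k) − β_k·A_E^⊤(A_E x^(k+1) − b_E) − A_I^⊤[β_k(A_I x^(k+1) − b_I) + λ_I^(k)]_+ − ρ_k(x^(k+1) − x^(k)) ∈ ∂G(x^(k+1)). Define λ_E^(k+1) = λ_E^(k) + β_k(A_E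 x^(k+1) − b_E) and λ_I^(k+1) = [λ_I^(k) + β_k(A_I x^(k+1) − b_I)]_+. Then: ε̄_k·‖x^(k+1) − x*‖ ≥ μ·‖x^(k+1) − x*‖² + (1/(2β_k))·(‖λ^(k+1) − λ*‖² + ‖λ^(k+1) − λ^(k)‖² − ‖λ^(k) − λ*‖²) + (ρ_k/2)·(‖x^(k+1) − x^(k)‖² + ‖x^(k+1) − x*‖² − ‖x^(k) − x*‖²). -/
open scoped RealInnerProductSpace

/-- Componentwise positive part `[v]₊` of a Euclidean vector. -/
noncomputable def posPart {m : ℕ} (v : EuclideanSpace ℝ (Fin m)) : EuclideanSpace ℝ (Fin m) :=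
  WithLp.toLp 2 (fun i => max (v i) 0)

/-- The subdifferential `∂G(x) = {ξ | ∀ u, G(u) ≥ G(x) + ⟨ξ, u − x⟩}`. -/
def subderiv {E : Type*} [NormedAddCommGroup E] [InnerProductSpace ℝ E]
    (G : E → ℝ) (x : E) : Set E :=
  {ξ | ∀ u, G x + ⟪ξ, u - x⟫ ≤ G u}

lemma polar' {E : Type*} [NormedAddCommGroup E] [InnerProductSpace ℝ E] (a b c : E) :
    2 * ⟪a - c, a - b⟫ = ‖a - c‖ ^ 2 + ‖a - b‖ ^ 2 - ‖b - c‖ ^ 2 := by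
  have h : b - c = (a - c) - (a - b) := by abel
  have h2 : ‖b - c‖ ^ 2 = ‖a - c‖ ^ 2 - 2 * ⟪a - c, a - b⟫ + ‖a - b‖ ^ 2 := by
    rw [h]; exact norm_sub_sq_real _ _
  linarith

lemma proj_ineq' (a s : ℝ) (hs : 0 ≤ s) : 0 ≤ (max a 0 - s) * (a - max a 0) := by
  rcases le_or_gt 0 a with h | h
  · rw [max_eq_left h]; ring_nf; simp
  · rw [max_eq_right h.le]
    nlinarith [mul_nonneg hs (neg_nonneg.mpr h.le)]

set_option maxHeartbeats 1000000

/-- One-step inequality of the inexact proximal augmented Lagrangian method (iPALM)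
for `min G(x) s.t. A_E x = b_E, A_I x ≤ b_I` with `G` `μ`-strongly convex:
`ε̄_k ‖x^{k+1} − x*‖ ≥ μ‖x^{k+1} − x*‖² + (1/(2β_k))(‖λ^{k+1} − λ*‖² + ‖λ^{k+1} − λ^k‖²
  − ‖λ^k − λ*‖²) + (ρ_k/2)(‖x^{k+1} − x^k‖² + ‖x^{k+1} − x*‖² − ‖x^k − x*‖²)`. -/
theorem stmt_13 {n mE mI : ℕ}
    (G : EuclideanSpace ℝ (Fin n) → ℝ) (μ : ℝ) (hμ : 0 ≤ μ)
    (hGconv : ConvexOn ℝ Set.univ G)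
    (hGsc : ∀ (xx u ξ : EuclideanSpace ℝ (Fin n)), ξ ∈ subderiv G xx →
      G xx + ⟪ξ, u - xx⟫ + μ / 2 * ‖u - xx‖ ^ 2 ≤ G u)
    (AE : EuclideanSpace ℝ (Fin n) →L[ℝ] EuclideanSpace ℝ (Fin mE))
    (AI : EuclideanSpace ℝ (Fin n) →L[ℝ] EuclideanSpace ℝ (Fin mI))
    (bE : EuclideanSpace ℝ (Fin mE)) (bI : EuclideanSpace ℝ (Fin mI))
    (xstar : EuclideanSpace ℝ (Fin n))
    (lamEstar : EuclideanSpace ℝ (Fin mE)) (lamIstar : EuclideanSpace ℝ (Fin mI))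
    (hkkt1 : -(ContinuousLinearMap.adjoint AE lamEstar +
        ContinuousLinearMap.adjoint AI lamIstar) ∈ subderiv G xstar)
    (hkkt2 : AE xstar = bE) (hkkt3 : ∀ i, AI xstar i ≤ bI i)
    (hkkt4 : ∀ i, 0 ≤ lamIstar i)
    (hkkt5 : ⟪lamIstar, AI xstar - bI⟫ = 0)
    (xk xk1 : EuclideanSpace ℝ (Fin n))
    (lamE : EuclideanSpace ℝ (Fin mE)) (lamI : EuclideanSpace ℝ (Fin mI))
    (βk ρk εk : ℝ) (hβ : 0 < βk) (hρ : 0 < ρk) (hε : 0 ≤ εk)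
    (v : EuclideanSpace ℝ (Fin n)) (hv : ‖v‖ ≤ εk)
    (hstat : v - ContinuousLinearMap.adjoint AE lamE -
        βk • ContinuousLinearMap.adjoint AE (AE xk1 - bE) -
        ContinuousLinearMap.adjoint AI (posPart (βk • (AI xk1 - bI) + lamI)) -
        ρk • (xk1 - xk) ∈ subderiv G xk1)
    (lamE1 : EuclideanSpace ℝ (Fin mE)) (lamI1 : EuclideanSpace ℝ (Fin mI))
    (hlamE1 : lamE1 = lamE + βk • (AE xk1 - bE))
    (hlamI1 : lamI1 = posPart (lamI + βk • (AI xk1 - bI))) :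
    μ * ‖xk1 - xstar‖ ^ 2 +
        1 / (2 * βk) * ((‖lamE1 - lamEstar‖ ^ 2 + ‖lamI1 - lamIstar‖ ^ 2) +
          (‖lamE1 - lamE‖ ^ 2 + ‖lamI1 - lamI‖ ^ 2) -
          (‖lamE - lamEstar‖ ^ 2 + ‖lamI - lamIstar‖ ^ 2)) +
        ρk / 2 * (‖xk1 - xk‖ ^ 2 + ‖xk1 - xstar‖ ^ 2 - ‖xk - xstar‖ ^ 2) ≤
      εk * ‖xk1 - xstar‖ := by
  have hp : posPart (βk • (AI xk1 - bI) + lamI) = lamI1 := by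
    rw [hlamI1, add_comm]
  have h1 := hGsc xk1 xstar _ hstat
  have h2 := hGsc xstar xk1 _ hkkt1
  rw [show (xstar - xk1 : EuclideanSpace ℝ (Fin n)) = -(xk1 - xstar) by abel,
    inner_neg_right, norm_neg] at h1
  have hkey0 : μ * ‖xk1 - xstar‖ ^ 2 ≤
      ⟪v - ContinuousLinearMap.adjoint AE lamE -
        βk • ContinuousLinearMap.adjoint AE (AE xk1 - bE) -
        ContinuousLinearMap.adjoint AI (posPart (βk • (AI xk1 - bI) + lamI)) -
        ρk • (xk1 - xk), xk1 - xstar⟫ -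
      ⟪-(ContinuousLinearMap.adjoint AE lamEstar +
        ContinuousLinearMap.adjoint AI lamIstar), xk1 - xstar⟫ := by linarith
  have hexp : ⟪v - ContinuousLinearMap.adjoint AE lamE -
        βk • ContinuousLinearMap.adjoint AE (AE xk1 - bE) -
        ContinuousLinearMap.adjoint AI (posPart (βk • (AI xk1 - bI) + lamI)) -
        ρk • (xk1 - xk), xk1 - xstar⟫ -
      ⟪-(ContinuousLinearMap.adjoint AE lamEstar +
        ContinuousLinearMap.adjoint AI lamIstar), xk1 - xstar⟫ =
      ⟪v, xk1 - xstar⟫ - ⟪lamE1 - lamEstar, AE xk1 - AE xstar⟫ -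
        ⟪lamI1 - lamIstar, AI xk1 - AI xstar⟫ - ρk * ⟪xk1 - xk, xk1 - xstar⟫ := by
    simp only [hp, hlamE1, inner_sub_left, inner_add_left, inner_neg_left,
      real_inner_smul_left, ContinuousLinearMap.adjoint_inner_left, map_sub,
      inner_sub_right]
    ring
  rw [hexp] at hkey0
  -- E equality
  have hEeq : ⟪lamE1 - lamEstar, AE xk1 - AE xstar⟫
      = 1 / (2 * βk) * (‖lamE1 - lamEstar‖ ^ 2 + ‖lamE1 - lamE‖ ^ 2
          - ‖lamE - lamEstar‖ ^ 2) := by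
    have h0 : AE xk1 - AE xstar = AE xk1 - bE := by rw [hkkt2]
    have hinner : ⟪lamE1 - lamEstar, lamE1 - lamE⟫
        = βk * ⟪lamE1 - lamEstar, AE xk1 - bE⟫ := by
      rw [show lamE1 - lamE = βk • (AE xk1 - bE) by rw [hlamE1]; abel,
        real_inner_smul_right]
    have h2 := polar' lamE1 lamE lamEstar
    rw [h0, one_div, inv_mul_eq_div, eq_div_iff (by positivity : (2 * βk) ≠ 0)]
    linarith
  -- I inequality
  have hIone : ∀ i, 0 ≤ lamI1 i := by
    intro i; rw [hlamI1]; exact le_max_right (α := ℝ) _ _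
  have hproj : 0 ≤ ⟪lamI1 - lamIstar, (lamI + βk • (AI xk1 - bI)) - lamI1⟫ := by
    rw [PiLp.inner_apply]
    apply Finset.sum_nonneg
    intro i _
    rw [hlamI1]
    simp only [RCLike.inner_apply, conj_trivial, PiLp.sub_apply, _root_.posPart]
    rw [mul_comm]
    exact proj_ineq' _ _ (hkkt4 i)
  have hcomp : ⟪lamI1, AI xstar - bI⟫ ≤ 0 := by
    rw [PiLp.inner_apply]
    apply Finset.sum_nonpos
    intro i _
    simp only [RCLike.inner_apply, conj_trivial, PiLp.sub_apply]
    exact mul_nonpos_of_nonpos_of_nonneg (sub_nonpos.mpr (hkkt3 i)) (hIone i)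
  have hIineq : 1 / (2 * βk) * (‖lamI1 - lamIstar‖ ^ 2 + ‖lamI1 - lamI‖ ^ 2
        - ‖lamI - lamIstar‖ ^ 2) ≤ ⟪lamI1 - lamIstar, AI xk1 - AI xstar⟫ := by
    have hstep : βk * ⟪lamI1 - lamIstar, AI xk1 - bI⟫
        = ⟪lamI1 - lamIstar, lamI1 - lamI⟫ +
          ⟪lamI1 - lamIstar, (lamI + βk • (AI xk1 - bI)) - lamI1⟫ := by
      rw [← inner_add_right, ← real_inner_smul_right]
      congr 1
      abel
    have h2 := polar' lamI1 lamI lamIstar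
    have hstar : ⟪lamI1 - lamIstar, AI xstar - bI⟫ ≤ 0 := by
      rw [inner_sub_left, hkkt5]; linarith
    have h3 : ⟪lamI1 - lamIstar, AI xk1 - bI⟫ ≤ ⟪lamI1 - lamIstar, AI xk1 - AI xstar⟫ := by
      have he : ⟪lamI1 - lamIstar, AI xk1 - AI xstar⟫
          = ⟪lamI1 - lamIstar, AI xk1 - bI⟫ - ⟪lamI1 - lamIstar, AI xstar - bI⟫ := by
        rw [← inner_sub_right]; congr 1; abel
      linarith
    have h4 : (‖lamI1 - lamIstar‖ ^ 2 + ‖lamI1 - lamI‖ ^ 2 - ‖lamI - lamIstar‖ ^ 2) / 2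
        ≤ βk * ⟪lamI1 - lamIstar, AI xk1 - AI xstar⟫ := by
      nlinarith [mul_le_mul_of_nonneg_left h3 hβ.le]
    have h5 : (‖lamI1 - lamIstar‖ ^ 2 + ‖lamI1 - lamI‖ ^ 2 - ‖lamI - lamIstar‖ ^ 2) / (2 * βk)
        ≤ ⟪lamI1 - lamIstar, AI xk1 - AI xstar⟫ := by
      rw [div_le_iff₀ (by positivity)]
      nlinarith [h4]
    calc 1 / (2 * βk) * (‖lamI1 - lamIstar‖ ^ 2 + ‖lamI1 - lamI‖ ^ 2 - ‖lamI - lamIstar‖ ^ 2)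
        = (‖lamI1 - lamIstar‖ ^ 2 + ‖lamI1 - lamI‖ ^ 2 - ‖lamI - lamIstar‖ ^ 2) / (2 * βk) := by
          ring
      _ ≤ _ := h5
  -- ρ equality
  have hρeq : ρk * ⟪xk1 - xk, xk1 - xstar⟫
      = ρk / 2 * (‖xk1 - xk‖ ^ 2 + ‖xk1 - xstar‖ ^ 2 - ‖xk - xstar‖ ^ 2) := by
    have hx : ⟪xk1 - xk, xk1 - xstar⟫
        = (‖xk1 - xk‖ ^ 2 + ‖xk1 - xstar‖ ^ 2 - ‖xk - xstar‖ ^ 2) / 2 := by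
      rw [real_inner_comm]; linarith [polar' xk1 xk xstar]
    rw [hx]; ring
  have hvb : ⟪v, xk1 - xstar⟫ ≤ εk * ‖xk1 - xstar‖ :=
    le_trans (real_inner_le_norm _ _) (mul_le_mul_of_nonneg_right hv (norm_nonneg _))
  linarith [hkey0, hEeq, hIineq, hρeq, hvb]
end

section
/- Let (x*, λ*) be a KKT pair of the affine-constrained problem, let β_0 > 0, ρ_0 > 0 and σ > 1, and set β_k = β_0·σ^k and ρ_k = ρ_0·σ^{−k} for k ≥ 0. Suppose the sequences (x^(k)), (λ^(k)) and tolerances ε̄_k ≥ 0 satisfy, for every k ≥ 0, the iPALM one-step inequality: ε̄_k·‖x^(k+1) − x*‖ ≥ μ·‖x^(k+1) − x*‖² + (1/(2β_k))·(‖λ^(k+1) − λ*‖² + ‖λ^(k+1) − λ^(k)‖² − ‖λ^(k) − λ*‖²) + (ρ_k/2)·(‖x^(k+1) − x^(k)‖² + ‖x^(k+1) − x*‖² − ‖x^(k) − x*‖²), with μ ≥ 0. Then for every k ≥ 0: √(β_0ρ_0·‖x^(k+1) − x*‖² + ‖λ^(k+1) − λ*‖²) ≤ Σ_{i=0}^{k}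 (2β_i·ε̄_i)/√(β_0ρ_0) + √(β_0ρ_0·‖x^(0) − x*‖² + ‖λ^(0) − λ*‖²). -/
lemma sqle_aux (s t c : ℝ) (hs : 0 ≤ s) (ht : 0 ≤ t) (hc : 0 ≤ c)
    (h : s ^ 2 ≤ t ^ 2 + c * s) : s ≤ t + c := by
  by_contra h'
  push_neg at h'
  nlinarith

/-- Uniform boundedness of the primal-dual iterates of iPALM: with `β_k = β₀σ^k`,
`ρ_k = ρ₀σ^{−k}` and the one-step inequality, one has
`√(β₀ρ₀‖x^{k+1} − x*‖² + ‖λ^{k+1} − λ*‖²) ≤ Σ_{i≤k} 2β_i ε̄_i/√(β₀ρ₀)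
  + √(β₀ρ₀‖x⁰ − x*‖² + ‖λ⁰ − λ*‖²)`. -/
theorem stmt_14 {E F : Type*} [NormedAddCommGroup E] [NormedAddCommGroup F]
    (xstar : E) (lamstar : F) (x : ℕ → E) (lam : ℕ → F)
    (β0 ρ0 σ μ : ℝ) (hβ0 : 0 < β0) (hρ0 : 0 < ρ0) (hσ : 1 < σ) (hμ : 0 ≤ μ)
    (εb : ℕ → ℝ) (hεb : ∀ k, 0 ≤ εb k)
    (hstep : ∀ k : ℕ,
      μ * ‖x (k + 1) - xstar‖ ^ 2 +
          1 / (2 * (β0 * σ ^ k)) * (‖lam (k + 1) - lamstar‖ ^ 2 +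
            ‖lam (k + 1) - lam k‖ ^ 2 - ‖lam k - lamstar‖ ^ 2) +
          (ρ0 / σ ^ k) / 2 * (‖x (k + 1) - x k‖ ^ 2 + ‖x (k + 1) - xstar‖ ^ 2 -
            ‖x k - xstar‖ ^ 2) ≤
        εb k * ‖x (k + 1) - xstar‖) :
    ∀ k : ℕ,
      Real.sqrt (β0 * ρ0 * ‖x (k + 1) - xstar‖ ^ 2 + ‖lam (k + 1) - lamstar‖ ^ 2) ≤
        ∑ i ∈ Finset.range (k + 1), 2 * (β0 * σ ^ i) * εb i / Real.sqrt (β0 * ρ0) +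
          Real.sqrt (β0 * ρ0 * ‖x 0 - xstar‖ ^ 2 + ‖lam 0 - lamstar‖ ^ 2) := by
  have hσ0 : (0:ℝ) < σ := lt_trans one_pos hσ
  set a : ℕ → ℝ := fun n => β0 * ρ0 * ‖x n - xstar‖ ^ 2 + ‖lam n - lamstar‖ ^ 2 with ha
  have hann : ∀ n, 0 ≤ a n := fun n => by positivity
  have hbr : (0:ℝ) < β0 * ρ0 := mul_pos hβ0 hρ0
  have hsbr : (0:ℝ) < Real.sqrt (β0 * ρ0) := Real.sqrt_pos.mpr hbr
  have key : ∀ n : ℕ, Real.sqrt (a (n + 1)) ≤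
      Real.sqrt (a n) + 2 * (β0 * σ ^ n) * εb n / Real.sqrt (β0 * ρ0) := by
    intro n
    have hσn : (0:ℝ) < σ ^ n := pow_pos hσ0 n
    have hβn : (0:ℝ) < β0 * σ ^ n := mul_pos hβ0 hσn
    -- multiply the step inequality by 2 β_n
    have h2 : a (n + 1) ≤ a n + 2 * (β0 * σ ^ n) * εb n * ‖x (n + 1) - xstar‖ := by
      have h1 := mul_le_mul_of_nonneg_right (hstep n) (le_of_lt (by positivity : (0:ℝ) < 2 * (β0 * σ ^ n)))
      have e1 : 1 / (2 * (β0 * σ ^ n)) * (2 * (β0 * σ ^ n)) = 1 := by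
        field_simp
      have e2 : (ρ0 / σ ^ n) / 2 * (2 * (β0 * σ ^ n)) = β0 * ρ0 := by
        field_simp
      have hμterm : 0 ≤ μ * ‖x (n + 1) - xstar‖ ^ 2 * (2 * (β0 * σ ^ n)) := by positivity
      simp only [ha]
      nlinarith [sq_nonneg ‖lam (n + 1) - lam n‖, sq_nonneg ‖x (n + 1) - x n‖,
        mul_le_mul_of_nonneg_right (le_refl (0:ℝ)) (le_refl (0:ℝ))]
    -- bound ‖x(n+1) − x*‖ by √(a (n+1))/√(β0ρ0)
    have hxb : ‖x (n + 1) - xstar‖ ≤ Real.sqrt (a (n + 1)) / Real.sqrt (β0 * ρ0) := by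
      rw [le_div_iff₀ hsbr]
      have h3 : Real.sqrt (β0 * ρ0) * ‖x (n + 1) - xstar‖
          = Real.sqrt (β0 * ρ0 * ‖x (n + 1) - xstar‖ ^ 2) := by
        rw [Real.sqrt_mul hbr.le, Real.sqrt_sq (norm_nonneg _)]
      rw [mul_comm] at h3
      rw [h3]
      exact Real.sqrt_le_sqrt (by simp only [ha]; nlinarith [sq_nonneg ‖lam (n+1) - lamstar‖])
    have hc : 0 ≤ 2 * (β0 * σ ^ n) * εb n := by
      have := hεb n; positivity
    have h4 : a (n + 1) ≤ a n + (2 * (β0 * σ ^ n) * εb n / Real.sqrt (β0 * ρ0)) * Real.sqrt (a (n + 1)) := by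
      have := mul_le_mul_of_nonneg_left hxb hc
      calc a (n + 1) ≤ a n + 2 * (β0 * σ ^ n) * εb n * ‖x (n + 1) - xstar‖ := h2
        _ ≤ a n + 2 * (β0 * σ ^ n) * εb n * (Real.sqrt (a (n + 1)) / Real.sqrt (β0 * ρ0)) := by linarith
        _ = a n + (2 * (β0 * σ ^ n) * εb n / Real.sqrt (β0 * ρ0)) * Real.sqrt (a (n + 1)) := by ring
    apply sqle_aux _ _ _ (Real.sqrt_nonneg _) (Real.sqrt_nonneg _) (by positivity)
    rw [Real.sq_sqrt (hann (n + 1)), Real.sq_sqrt (hann n)]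
    exact h4
  intro k
  induction k with
  | zero =>
      have h := key 0
      simp only [ha] at h
      rw [Finset.sum_range_one]
      simp only [pow_zero, mul_one] at h ⊢
      linarith
  | succ n ih =>
      have h := key (n + 1)
      simp only [ha] at h
      rw [Finset.sum_range_succ]
      linarith
end

section
/- Let β > 0, ρ ≥ 0, ε̄ ≥ 0, and suppose λ_E^(k) = λ_E^(k−1) + β(A_E x^(k) − b_E) and λ_I^(k) = [λ_I^(k−1) + β(A_I x^(k) − b_I)]_+ with λ_I^(k−1) ≥ 0 componentwise, and that there exists v with ‖v‖ ≤ ε̄ such that v − A_E^⊤λ_E^(k−1) − β·A_E^⊤(A_E x^(k) − b_E) − A_I^⊤[β(A_I x^(k) − b_I) + λ_I^(k−1)]_+ − ρ(x^(k) − x^(k−1)) ∈ ∂G(x^(k)). Then: (i) dist(0, ∂G(x^(k)) + A^⊤λ^(k)) ≤ ε̄ + ρ·‖x^(k) − x^(k−1)‖, and (ii) √(‖A_E x^(k) − b_E‖² + ‖[A_I x^(k) − b_I]_+‖²) ≤ (1/β)·‖λ^(k) − λ^(k−1)‖. -/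
open scoped RealInnerProductSpace

lemma norm_le_of_abs_le {m : ℕ} (y z : EuclideanSpace ℝ (Fin m))
    (h : ∀ i, |z i| ≤ |y i|) : ‖z‖ ≤ ‖y‖ := by
  rw [EuclideanSpace.norm_eq, EuclideanSpace.norm_eq]
  apply Real.sqrt_le_sqrt
  apply Finset.sum_le_sum
  intro i _
  have := h i
  simp only [Real.norm_eq_abs]
  nlinarith [abs_nonneg (z i), abs_nonneg (y i), sq_abs (z i), sq_abs (y i)]

/-- Dual-feasibility and primal-feasibility certification inequalities of iPALM:
(i) `dist(0, ∂G(x^k) + A^⊤λ^k) ≤ ε̄ + ρ‖x^k − x^{k−1}‖`, and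
(ii) `√(‖A_E x^k − b_E‖² + ‖[A_I x^k − b_I]₊‖²) ≤ (1/β)‖λ^k − λ^{k−1}‖`. -/
theorem stmt_15 {n mE mI : ℕ}
    (G : EuclideanSpace ℝ (Fin n) → ℝ) (hGconv : ConvexOn ℝ Set.univ G)
    (AE : EuclideanSpace ℝ (Fin n) →L[ℝ] EuclideanSpace ℝ (Fin mE))
    (AI : EuclideanSpace ℝ (Fin n) →L[ℝ] EuclideanSpace ℝ (Fin mI))
    (bE : EuclideanSpace ℝ (Fin mE)) (bI : EuclideanSpace ℝ (Fin mI))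
    (β ρ εb : ℝ) (hβ : 0 < β) (hρ : 0 ≤ ρ) (hεb : 0 ≤ εb)
    (xprev xk : EuclideanSpace ℝ (Fin n))
    (lamE0 lamE1 : EuclideanSpace ℝ (Fin mE)) (lamI0 lamI1 : EuclideanSpace ℝ (Fin mI))
    (hlamI0 : ∀ i, 0 ≤ lamI0 i)
    (hlamE1 : lamE1 = lamE0 + β • (AE xk - bE))
    (hlamI1 : lamI1 = posPart (lamI0 + β • (AI xk - bI)))
    (v : EuclideanSpace ℝ (Fin n)) (hv : ‖v‖ ≤ εb)
    (hstat : v - ContinuousLinearMap.adjoint AE lamE0 -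
        β • ContinuousLinearMap.adjoint AE (AE xk - bE) -
        ContinuousLinearMap.adjoint AI (posPart (β • (AI xk - bI) + lamI0)) -
        ρ • (xk - xprev) ∈ subderiv G xk) :
    Metric.infDist 0 {w : EuclideanSpace ℝ (Fin n) | ∃ ξ ∈ subderiv G xk,
        w = ξ + ContinuousLinearMap.adjoint AE lamE1 +
          ContinuousLinearMap.adjoint AI lamI1} ≤ εb + ρ * ‖xk - xprev‖ ∧
    Real.sqrt (‖AE xk - bE‖ ^ 2 + ‖posPart (AI xk - bI)‖ ^ 2) ≤
      1 / β * Real.sqrt (‖lamE1 - lamE0‖ ^ 2 + ‖lamI1 - lamI0‖ ^ 2) := by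
  constructor
  · -- part (i)
    have hmem : (v - ρ • (xk - xprev)) ∈ {w : EuclideanSpace ℝ (Fin n) | ∃ ξ ∈ subderiv G xk,
        w = ξ + ContinuousLinearMap.adjoint AE lamE1 +
          ContinuousLinearMap.adjoint AI lamI1} := by
      refine ⟨_, hstat, ?_⟩
      rw [hlamE1, hlamI1, add_comm lamI0]
      simp only [map_add, map_smul]
      abel
    have h1 : Metric.infDist (0 : EuclideanSpace ℝ (Fin n)) _ ≤
        dist 0 (v - ρ • (xk - xprev)) := Metric.infDist_le_dist_of_mem hmem
    refine h1.trans ?_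
    rw [dist_eq_norm, zero_sub, norm_neg]
    calc ‖v - ρ • (xk - xprev)‖ ≤ ‖v‖ + ‖ρ • (xk - xprev)‖ := norm_sub_le _ _
      _ ≤ εb + ρ * ‖xk - xprev‖ := by
          rw [norm_smul, Real.norm_eq_abs, abs_of_nonneg hρ]
          exact add_le_add hv le_rfl
  · -- part (ii)
    have hE : ‖lamE1 - lamE0‖ = β * ‖AE xk - bE‖ := by
      rw [hlamE1]
      simp [norm_smul, abs_of_pos hβ]
    have hI : β * ‖posPart (AI xk - bI)‖ ≤ ‖lamI1 - lamI0‖ := by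
      have : β * ‖posPart (AI xk - bI)‖ = ‖β • posPart (AI xk - bI)‖ := by
        rw [norm_smul, Real.norm_eq_abs, abs_of_pos hβ]
      rw [this]
      apply norm_le_of_abs_le
      intro i
      rw [hlamI1]
      simp only [_root_.posPart.eq_def, PiLp.smul_apply, PiLp.sub_apply, PiLp.add_apply, smul_eq_mul,
        WithLp.ofLp_toLp]
      show |β * max (AI xk i - bI i) 0| ≤ |max (lamI0 i + β * (AI xk i - bI i)) 0 - lamI0 i|
      rcases le_or_gt (AI xk i - bI i) 0 with h | h
      · rw [max_eq_right h, mul_zero, abs_zero]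
        exact abs_nonneg _
      · have h0 : (0:ℝ) ≤ β * (AI xk i - bI i) := (mul_pos hβ h).le
        have h1 := hlamI0 i
        rw [max_eq_left h.le, max_eq_left (by linarith), add_sub_cancel_left]
    have key : β * Real.sqrt (‖AE xk - bE‖ ^ 2 + ‖posPart (AI xk - bI)‖ ^ 2) ≤
        Real.sqrt (‖lamE1 - lamE0‖ ^ 2 + ‖lamI1 - lamI0‖ ^ 2) := by
      rw [show β = Real.sqrt (β ^ 2) from (Real.sqrt_sq hβ.le).symm, ← Real.sqrt_mul (by positivity)]
      apply Real.sqrt_le_sqrt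
      rw [hE]
      nlinarith [norm_nonneg (posPart (AI xk - bI)), norm_nonneg (lamI1 - lamI0),
        norm_nonneg (AE xk - bE), mul_le_mul_of_nonneg_left hI hβ.le]
    rw [one_div, inv_mul_eq_div, le_div_iff₀ hβ, mul_comm]
    exact key
end

section
/- Suppose f is convex, differentiable and μ-strongly convex with μ > 0, r and φ are proper closed convex, dom φ is bounded with diameter D_φ, and a saddle point (x*, y*) of the bilinear saddle-point problem exists, so that p(x*) = d(y*) = p*. If (x̄, ȳ) is an ε-saddle point for some ε ≥ 0, i.e., dist(0, ∂G(x̄) + A^⊤ȳ) ≤ ε and dist(0, A·x̄ − ∂φ(ȳ)) ≤ ε, then the duality gap satisfies p(x̄) − d(ȳ) ≤ 2ε·D_φ + 3ε²/(2μ). Moreover, p(x̄) ≤ p* + ε·D_φ + ε²/(2μ) and d(ȳ) ≥ p* − ε·D_φ − ε²/μ. -/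
open scoped RealInnerProductSpace

/-- The subdifferential of `φ` at `y` relative to the domain `Y`. -/
def subderivOn {F : Type*} [NormedAddCommGroup F] [InnerProductSpace ℝ F]
    (φ : F → ℝ) (Y : Set F) (y : F) : Set F :=
  {ζ | ∀ u ∈ Y, φ y + ⟪ζ, u - y⟫ ≤ φ u}

lemma strong_subgrad {n : ℕ} (f r : EuclideanSpace ℝ (Fin n) → ℝ)
    (f' : EuclideanSpace ℝ (Fin n) → EuclideanSpace ℝ (Fin n)) (μ : ℝ) (hμ : 0 < μ)
    (hf : ∀ u v : EuclideanSpace ℝ (Fin n),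
      f v + ⟪f' v, u - v⟫ + μ / 2 * ‖u - v‖ ^ 2 ≤ f u)
    (hr : ConvexOn ℝ Set.univ r)
    (x ξ : EuclideanSpace ℝ (Fin n))
    (hξ : ξ ∈ subderiv (fun u => f u + r u) x) (w : EuclideanSpace ℝ (Fin n)) :
    (f x + r x) + ⟪ξ, w - x⟫ + μ / 2 * ‖w - x‖ ^ 2 ≤ f w + r w := by
  have hsub : ∀ u, (f x + r x) + ⟪ξ, u - x⟫ ≤ f u + r u := fun u => hξ u
  have key : ∀ t : ℝ, 0 < t → t < 1 →
      (1 - t) * (μ / 2 * ‖w - x‖ ^ 2) ≤ (f w + r w) - (f x + r x) - ⟪ξ, w - x⟫ := by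
    intro t ht0 ht1
    set xt : EuclideanSpace ℝ (Fin n) := x + t • (w - x) with hxt
    have h1 : (f x + r x) + t * ⟪ξ, w - x⟫ ≤ f xt + r xt := by
      have h := hsub xt
      have e : xt - x = t • (w - x) := by rw [hxt]; module
      rw [e, real_inner_smul_right] at h
      exact h
    have hxw1 : x - xt = (-t) • (w - x) := by rw [hxt]; module
    have hxw2 : w - xt = (1 - t) • (w - x) := by rw [hxt]; module
    have ha := hf x xt
    have hb := hf w xt
    rw [hxw1, real_inner_smul_right, norm_smul, Real.norm_eq_abs, mul_pow, sq_abs] at ha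
    rw [hxw2, real_inner_smul_right, norm_smul, Real.norm_eq_abs, mul_pow, sq_abs] at hb
    have hrc : r xt ≤ (1 - t) * r x + t * r w := by
      have hxteq : xt = (1 - t) • x + t • w := by rw [hxt]; module
      have h := hr.2 (Set.mem_univ x) (Set.mem_univ w) (show (0:ℝ) ≤ 1 - t by linarith) ht0.le (show (1 - t) + t = 1 by ring)
      rw [← hxteq] at h
      exact h
    have hfc : f xt ≤ (1 - t) * f x + t * f w - μ / 2 * (t * (1 - t)) * ‖w - x‖ ^ 2 := by
      nlinarith [mul_le_mul_of_nonneg_left ha (by linarith : (0:ℝ) ≤ 1 - t),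
        mul_le_mul_of_nonneg_left hb (le_of_lt ht0)]
    nlinarith [h1, hrc, hfc]
  set a := μ / 2 * ‖w - x‖ ^ 2 with ha
  set c := (f w + r w) - (f x + r x) - ⟪ξ, w - x⟫ with hc
  have ha0 : 0 ≤ a := by positivity
  have hc0 : 0 ≤ c := by
    have h := key (1/2) (by norm_num) (by norm_num)
    linarith
  have hac : a ≤ c := by
    rcases eq_or_lt_of_le ha0 with h | h
    · linarith
    · by_contra hcon
      push_neg at hcon
      have hts : (0:ℝ) < (a - c) / (2 * a) := by
        apply div_pos (by linarith) (by linarith)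
      have htl : (a - c) / (2 * a) < 1 := by
        rw [div_lt_one (by linarith)]; linarith
      have hk := key _ hts htl
      have hexp : (1 - (a - c) / (2 * a)) * a = a - (a - c) / 2 := by
        field_simp
      rw [hexp] at hk
      linarith
  linarith

/-- Duality gap of an `ε`-saddle point of the bilinear saddle-point problem:
if `(x̄, ȳ)` is an `ε`-saddle point, then `p(x̄) − d(ȳ) ≤ 2εD_φ + 3ε²/(2μ)`;
moreover `p(x̄) ≤ p* + εD_φ + ε²/(2μ)` and `d(ȳ) ≥ p* − εD_φ − ε²/μ`. -/
theorem stmt_17 {n m : ℕ}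
    (f r : EuclideanSpace ℝ (Fin n) → ℝ)
    (f' : EuclideanSpace ℝ (Fin n) → EuclideanSpace ℝ (Fin n)) (μ : ℝ) (hμ : 0 < μ)
    (hf : ∀ u v : EuclideanSpace ℝ (Fin n),
      f v + ⟪f' v, u - v⟫ + μ / 2 * ‖u - v‖ ^ 2 ≤ f u)
    (hr : ConvexOn ℝ Set.univ r)
    (A : EuclideanSpace ℝ (Fin n) →L[ℝ] EuclideanSpace ℝ (Fin m))
    (Yd : Set (EuclideanSpace ℝ (Fin m))) (hYne : Yd.Nonempty) (hYcl : IsClosed Yd)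
    (φ : EuclideanSpace ℝ (Fin m) → ℝ) (hφ : ConvexOn ℝ Yd φ)
    (hφlsc : LowerSemicontinuousOn φ Yd)
    (Dφ : ℝ) (hD : ∀ y1 ∈ Yd, ∀ y2 ∈ Yd, ‖y1 - y2‖ ≤ Dφ)
    (G : EuclideanSpace ℝ (Fin n) → ℝ) (hG : G = fun u => f u + r u)
    (p : EuclideanSpace ℝ (Fin n) → ℝ)
    (hp : p = fun u => G u + sSup ((fun y => ⟪y, A u⟫ - φ y) '' Yd))
    (d : EuclideanSpace ℝ (Fin m) → ℝ)
    (hd : d = fun y => sInf (Set.range fun u => G u + ⟪y, A u⟫) - φ y)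
    (xstar : EuclideanSpace ℝ (Fin n)) (ystar : EuclideanSpace ℝ (Fin m))
    (hystar : ystar ∈ Yd)
    (hsd1 : ∃ ξ ∈ subderiv G xstar, ξ + ContinuousLinearMap.adjoint A ystar = 0)
    (hsd2 : ∃ ζ ∈ subderivOn φ Yd ystar, A xstar - ζ = 0)
    (hpd : p xstar = d ystar)
    (ε : ℝ) (hε : 0 ≤ ε)
    (xbar : EuclideanSpace ℝ (Fin n)) (ybar : EuclideanSpace ℝ (Fin m)) (hybar : ybar ∈ Yd)
    (h1 : ∃ u, ‖u‖ ≤ ε ∧ ∃ ξ ∈ subderiv G xbar,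
      u = ξ + ContinuousLinearMap.adjoint A ybar)
    (h2 : ∃ v, ‖v‖ ≤ ε ∧ ∃ ζ ∈ subderivOn φ Yd ybar, v = A xbar - ζ) :
    p xbar - d ybar ≤ 2 * ε * Dφ + 3 * ε ^ 2 / (2 * μ) ∧
    p xbar ≤ p xstar + ε * Dφ + ε ^ 2 / (2 * μ) ∧
    p xstar - ε * Dφ - ε ^ 2 / μ ≤ d ybar := by
  classical
  obtain ⟨u, hu, ξb, hξb, hueq⟩ := h1
  obtain ⟨v, hv, ζb, hζb, hveq⟩ := h2
  obtain ⟨y0, hy0⟩ := hYne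
  have hDφ0 : 0 ≤ Dφ := le_trans (norm_nonneg _) (hD y0 hy0 y0 hy0)
  have hGeq : ∀ w, G w = f w + r w := fun w => by rw [hG]
  have hξb' : ξb ∈ subderiv (fun u => f u + r u) xbar := by rw [← hG]; exact hξb
  have hGs : ∀ w, G xbar + ⟪ξb, w - xbar⟫ + μ / 2 * ‖w - xbar‖ ^ 2 ≤ G w := by
    intro w
    rw [hGeq, hGeq]
    exact strong_subgrad f r f' μ hμ hf hr xbar ξb hξb' w
  -- key upper bound on the φ-dual term via the subgradient ζb at ybar
  have hkey : ∀ (x : EuclideanSpace ℝ (Fin n)), ∀ y ∈ Yd,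
      ⟪y, A x⟫ - φ y ≤ (⟪ybar, A x⟫ - φ ybar) + ‖y - ybar‖ * ‖A x - ζb‖ := by
    intro x y hy
    have hsg := hζb y hy
    have h2 : ⟪y - ybar, A x - ζb⟫ = ⟪y, A x⟫ - ⟪ybar, A x⟫ - ⟪ζb, y - ybar⟫ := by
      simp only [inner_sub_left, inner_sub_right]
      rw [real_inner_comm ζb y, real_inner_comm ζb ybar]
    have h3 := real_inner_le_norm (y - ybar) (A x - ζb)
    linarith
  -- key lower bound on G w + ⟪y, A w⟫ via strong convexity at xbar
  have hlow : ∀ (y : EuclideanSpace ℝ (Fin m)) (w : EuclideanSpace ℝ (Fin n)),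
      G xbar + ⟪y, A xbar⟫ - ‖ξb + (ContinuousLinearMap.adjoint A) y‖ ^ 2 / (2 * μ)
        ≤ G w + ⟪y, A w⟫ := by
    intro y w
    have hs := hGs w
    have hA : ⟪(ContinuousLinearMap.adjoint A) y, w - xbar⟫ = ⟪y, A w⟫ - ⟪y, A xbar⟫ := by
      rw [ContinuousLinearMap.adjoint_inner_left, map_sub, inner_sub_right]
    set K := ‖ξb + (ContinuousLinearMap.adjoint A) y‖ with hK
    set s := ‖w - xbar‖ with hs'
    have hip : -(K * s) ≤ ⟪ξb, w - xbar⟫ + ⟪(ContinuousLinearMap.adjoint A) y, w - xbar⟫ := by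
      have h := abs_real_inner_le_norm (ξb + (ContinuousLinearMap.adjoint A) y) (w - xbar)
      have h2 := neg_abs_le ⟪ξb + (ContinuousLinearMap.adjoint A) y, w - xbar⟫
      rw [inner_add_left] at h h2
      linarith
    have hq : K * s - μ / 2 * s ^ 2 ≤ K ^ 2 / (2 * μ) := by
      have he : (K - μ * s) ^ 2 / (2 * μ) = K ^ 2 / (2 * μ) - (K * s - μ / 2 * s ^ 2) := by
        field_simp; ring
      nlinarith [div_nonneg (sq_nonneg (K - μ * s)) (by linarith : (0:ℝ) ≤ 2 * μ)]
    linarith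
  have hKbar : ‖ξb + (ContinuousLinearMap.adjoint A) ybar‖ ≤ ε := hueq ▸ hu
  have hKsq : ‖ξb + (ContinuousLinearMap.adjoint A) ybar‖ ^ 2 / (2 * μ) ≤ ε ^ 2 / (2 * μ) := by
    gcongr
  have hvnorm : ‖A xbar - ζb‖ ≤ ε := by rw [← hveq]; exact hv
  -- S1 : p xbar ≤ Lb + ε * Dφ
  have hS1 : p xbar ≤ (G xbar + ⟪ybar, A xbar⟫ - φ ybar) + ε * Dφ := by
    rw [hp]
    simp only
    have hsup : sSup ((fun y => ⟪y, A xbar⟫ - φ y) '' Yd)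
        ≤ ⟪ybar, A xbar⟫ - φ ybar + ε * Dφ := by
      apply csSup_le (Set.Nonempty.image _ ⟨y0, hy0⟩)
      rintro _ ⟨y, hy, rfl⟩
      have h := hkey xbar y hy
      have hn : ‖y - ybar‖ ≤ Dφ := hD y hy ybar hybar
      have hm : ‖y - ybar‖ * ‖A xbar - ζb‖ ≤ Dφ * ε :=
        mul_le_mul hn hvnorm (norm_nonneg _) hDφ0
      simp only
      linarith
    linarith
  -- S2 : Lb - ε²/(2μ) ≤ d ybar
  have hS2 : (G xbar + ⟪ybar, A xbar⟫ - φ ybar) - ε ^ 2 / (2 * μ) ≤ d ybar := by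
    rw [hd]
    simp only
    have hinf : G xbar + ⟪ybar, A xbar⟫
        - ‖ξb + (ContinuousLinearMap.adjoint A) ybar‖ ^ 2 / (2 * μ)
        ≤ sInf (Set.range fun u => G u + ⟪ybar, A u⟫) := by
      apply le_csInf (Set.range_nonempty _)
      rintro _ ⟨w, rfl⟩
      exact hlow ybar w
    linarith
  -- S3 : Lb ≤ G xstar + ⟪ybar, A xstar⟫ - φ ybar + ε²/(2μ)
  have hS3 : G xbar + ⟪ybar, A xbar⟫ - φ ybar
      ≤ (G xstar + ⟪ybar, A xstar⟫ - φ ybar) + ε ^ 2 / (2 * μ) := by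
    have h := hlow ybar xstar
    linarith
  -- S4 : G xstar + ⟪ybar, A xstar⟫ - φ ybar ≤ p xstar
  have hS4 : G xstar + ⟪ybar, A xstar⟫ - φ ybar ≤ p xstar := by
    rw [hp]
    simp only
    have hbdd : BddAbove ((fun y => ⟪y, A xstar⟫ - φ y) '' Yd) := by
      refine ⟨⟪ybar, A xstar⟫ - φ ybar + Dφ * ‖A xstar - ζb‖, ?_⟩
      rintro _ ⟨y, hy, rfl⟩
      have h := hkey xstar y hy
      have hn : ‖y - ybar‖ ≤ Dφ := hD y hy ybar hybar
      have hm : ‖y - ybar‖ * ‖A xstar - ζb‖ ≤ Dφ * ‖A xstar - ζb‖ :=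
        mul_le_mul_of_nonneg_right hn (norm_nonneg _)
      simp only
      linarith
    have h := le_csSup hbdd (Set.mem_image_of_mem _ hybar)
    linarith
  -- S5 : d ystar ≤ G xbar + ⟪ystar, A xbar⟫ - φ ystar
  have hS5 : d ystar ≤ G xbar + ⟪ystar, A xbar⟫ - φ ystar := by
    rw [hd]
    simp only
    have hbdd : BddBelow (Set.range fun w => G w + ⟪ystar, A w⟫) := by
      refine ⟨G xbar + ⟪ystar, A xbar⟫
        - ‖ξb + (ContinuousLinearMap.adjoint A) ystar‖ ^ 2 / (2 * μ), ?_⟩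
      rintro _ ⟨w, rfl⟩
      exact hlow ystar w
    have h := csInf_le hbdd ⟨xbar, rfl⟩
    simp only at h
    linarith
  -- S6 : G xbar + ⟪ystar, A xbar⟫ - φ ystar ≤ Lb + ε * Dφ
  have hS6 : G xbar + ⟪ystar, A xbar⟫ - φ ystar
      ≤ (G xbar + ⟪ybar, A xbar⟫ - φ ybar) + ε * Dφ := by
    have h := hkey xbar ystar hystar
    have hn : ‖ystar - ybar‖ ≤ Dφ := hD ystar hystar ybar hybar
    have hm : ‖ystar - ybar‖ * ‖A xbar - ζb‖ ≤ Dφ * ε :=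
      mul_le_mul hn hvnorm (norm_nonneg _) hDφ0
    linarith
  -- assembly
  have hεD : 0 ≤ ε * Dφ := mul_nonneg hε hDφ0
  have he1 : 0 ≤ ε ^ 2 / (2 * μ) := by positivity
  have he2 : 3 * ε ^ 2 / (2 * μ) = 3 * (ε ^ 2 / (2 * μ)) := by ring
  have he3 : ε ^ 2 / μ = 2 * (ε ^ 2 / (2 * μ)) := by
    field_simp
  refine ⟨by linarith, by linarith, by linarith⟩
end

section
/- Suppose f is convex, differentiable and μ-strongly convex with μ > 0, r and φ are proper closed convex, and dom φ is bounded with diameter D_φ > 0. Given ε > 0, set ρ = ε/D_φ, fix y⁰ ∈ dom φ, and define h_ρ(x) = max_y {⟨y, A x⟩ − φ(y) − (ρ/2)‖y − y⁰‖²} (the maximum is attained at a unique point for each x, and ∇h_ρ(x) = A^⊤·argmax). Suppose x̄ satisfies dist(0, ∇f(x̄) + ∇h_ρ(x̄) + ∂r(x̄)) ≤ ε, and let ȳ be the maximizer in the definition of h_ρ(x̄). Then (x̄, ȳ) is an ε-saddle point of the original saddle-point problem: dist(0, ∂G(x̄) + A^⊤ȳ) ≤ ε and dist(0, A·x̄ −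 ∂φ(ȳ)) ≤ ε, where ∂G(x̄) = ∇f(x̄) + ∂r(x̄). -/
open scoped RealInnerProductSpace

lemma exists_subgrad {n : ℕ} (r : EuclideanSpace ℝ (Fin n) → ℝ)
    (hr : ConvexOn ℝ Set.univ r) (x : EuclideanSpace ℝ (Fin n)) :
    ∃ ξ, ξ ∈ subderiv r x := by
  have hcont : Continuous r := by
    rw [← continuousOn_univ]
    exact hr.continuousOn isOpen_univ
  set s : Set (EuclideanSpace ℝ (Fin n) × ℝ) := {p | r p.1 < p.2} with hs
  have hopen : IsOpen s := by
    have : s = (fun p : EuclideanSpace ℝ (Fin n) × ℝ => p.2 - r p.1) ⁻¹' Set.Ioi 0 := by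
      ext p; simp [hs, sub_pos]
    rw [this]
    exact (continuous_snd.sub (hcont.comp continuous_fst)).isOpen_preimage _ isOpen_Ioi
  have hconv : Convex ℝ s := by
    rintro p hp q hq a b ha hb hab
    simp only [hs, Set.mem_setOf_eq] at *
    have h1 : r (a • p.1 + b • q.1) ≤ a * r p.1 + b * r q.1 :=
      hr.2 (Set.mem_univ _) (Set.mem_univ _) ha hb hab
    have h2 : a * r p.1 + b * r q.1 < a * p.2 + b * q.2 := by
      rcases ha.eq_or_lt with h | h
      · have hb1 : b = 1 := by linarith
        simp [← h, hb1, hq]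
      · have := mul_lt_mul_of_pos_left hp h
        have := mul_le_mul_of_nonneg_left hq.le hb
        linarith
    calc r ((a • p + b • q).1) = r (a • p.1 + b • q.1) := rfl
      _ < a * p.2 + b * q.2 := lt_of_le_of_lt h1 h2
      _ = (a • p + b • q).2 := by simp
  have hx : (x, r x) ∉ s := by simp [hs]
  obtain ⟨L, hL⟩ := geometric_hahn_banach_open_point hconv hopen hx
  set c := L (0, 1) with hc
  have hdecomp : ∀ u : EuclideanSpace ℝ (Fin n), ∀ t : ℝ, L (u, t) = L (u, 0) + t * c := by
    intro u t
    have h : (u, t) = (u, (0:ℝ)) + t • ((0:EuclideanSpace ℝ (Fin n)), (1:ℝ)) := by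
      simp [Prod.ext_iff]
    rw [h, map_add, map_smul]
    simp [hc, smul_eq_mul]
  have hcneg : c < 0 := by
    have h1 : ((x, r x + 1) : EuclideanSpace ℝ (Fin n) × ℝ) ∈ s := by simp [hs]
    have := hL _ h1
    rw [hdecomp x (r x + 1), hdecomp x (r x)] at this
    linarith
  have key : ∀ u : EuclideanSpace ℝ (Fin n), L (u, 0) + r u * c ≤ L (x, 0) + r x * c := by
    intro u
    have hδ : ∀ δ : ℝ, 0 < δ → L (u, 0) + r u * c + δ * c < L (x, 0) + r x * c := by
      intro δ hδ0
      have h1 : ((u, r u + δ) : EuclideanSpace ℝ (Fin n) × ℝ) ∈ s := by simp [hs, hδ0]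
      have := hL _ h1
      rw [hdecomp u (r u + δ), hdecomp x (r x)] at this
      linarith
    by_contra hcon
    push_neg at hcon
    set e := L (u, 0) + r u * c - (L (x, 0) + r x * c) with he
    have hepos : 0 < e := by linarith
    have hδpos : 0 < e / (-c) := div_pos hepos (by linarith)
    have h2 := hδ _ hδpos
    have hc0 : c ≠ 0 := ne_of_lt hcneg
    have h3 : e / (-c) * c = -e := by
      rw [div_neg, neg_mul, div_mul_cancel₀ _ hc0]
    rw [h3] at h2
    linarith
  set β := -c with hβ
  have hβpos : 0 < β := by simp [hβ]; linarith
  set G : EuclideanSpace ℝ (Fin n) →L[ℝ] ℝ := L.comp (ContinuousLinearMap.inl ℝ (EuclideanSpace ℝ (Fin n)) ℝ) with hG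
  refine ⟨β⁻¹ • (InnerProductSpace.toDual ℝ (EuclideanSpace ℝ (Fin n))).symm G, fun u => ?_⟩
  have hinner : ⟪β⁻¹ • (InnerProductSpace.toDual ℝ (EuclideanSpace ℝ (Fin n))).symm G, u - x⟫
      = β⁻¹ * (L (u, 0) - L (x, 0)) := by
    rw [real_inner_smul_left, InnerProductSpace.toDual_symm_apply]
    congr 1
    have : G (u - x) = G u - G x := map_sub G u x
    simpa [hG] using this
  have hkey : L (u, 0) - L (x, 0) ≤ β * (r u - r x) := by
    have := key u
    simp only [hβ]
    nlinarith
  rw [hinner]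
  have h4 : β⁻¹ * (L (u, 0) - L (x, 0)) ≤ β⁻¹ * (β * (r u - r x)) :=
    mul_le_mul_of_nonneg_left hkey (inv_nonneg.mpr hβpos.le)
  have h5 : β⁻¹ * (β * (r u - r x)) = r u - r x := by field_simp
  linarith


/-- An `ε`-stationary point of Nesterov's smoothed problem (with `ρ = ε/D_φ`) yields
an `ε`-saddle point of the original bilinear saddle-point problem:
`dist(0, ∂G(x̄) + A^⊤ȳ) ≤ ε` and `dist(0, A x̄ − ∂φ(ȳ)) ≤ ε`,
where `ȳ` is the maximizer defining `h_ρ(x̄)` and `∂G(x̄) = ∇f(x̄) + ∂r(x̄)`. -/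
theorem stmt_18 {n m : ℕ}
    (f r : EuclideanSpace ℝ (Fin n) → ℝ)
    (f' : EuclideanSpace ℝ (Fin n) → EuclideanSpace ℝ (Fin n)) (μ : ℝ) (hμ : 0 < μ)
    (hf : ∀ u v : EuclideanSpace ℝ (Fin n),
      f v + ⟪f' v, u - v⟫ + μ / 2 * ‖u - v‖ ^ 2 ≤ f u)
    (hr : ConvexOn ℝ Set.univ r)
    (A : EuclideanSpace ℝ (Fin n) →L[ℝ] EuclideanSpace ℝ (Fin m))
    (Yd : Set (EuclideanSpace ℝ (Fin m))) (hYne : Yd.Nonempty) (hYcl : IsClosed Yd)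
    (φ : EuclideanSpace ℝ (Fin m) → ℝ) (hφ : ConvexOn ℝ Yd φ)
    (hφlsc : LowerSemicontinuousOn φ Yd)
    (Dφ : ℝ) (hDpos : 0 < Dφ) (hD : ∀ y1 ∈ Yd, ∀ y2 ∈ Yd, ‖y1 - y2‖ ≤ Dφ)
    (ε : ℝ) (hε : 0 < ε) (ρ : ℝ) (hρ : ρ = ε / Dφ)
    (y0 : EuclideanSpace ℝ (Fin m)) (hy0 : y0 ∈ Yd)
    (xbar : EuclideanSpace ℝ (Fin n)) (ybar : EuclideanSpace ℝ (Fin m)) (hybar : ybar ∈ Yd)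
    (hmax : ∀ y ∈ Yd,
      ⟪y, A xbar⟫ - φ y - ρ / 2 * ‖y - y0‖ ^ 2 ≤
        ⟪ybar, A xbar⟫ - φ ybar - ρ / 2 * ‖ybar - y0‖ ^ 2)
    (hstat : Metric.infDist 0 {v : EuclideanSpace ℝ (Fin n) | ∃ ξ ∈ subderiv r xbar,
        v = f' xbar + ContinuousLinearMap.adjoint A ybar + ξ} ≤ ε) :
    Metric.infDist 0 {w : EuclideanSpace ℝ (Fin n) |
        ∃ ξG ∈ subderiv (fun u => f u + r u) xbar,
          w = ξG + ContinuousLinearMap.adjoint A ybar} ≤ ε ∧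
    Metric.infDist 0 {v : EuclideanSpace ℝ (Fin m) | ∃ ζ ∈ subderivOn φ Yd ybar,
        v = A xbar - ζ} ≤ ε := by
  have hρpos : 0 < ρ := by rw [hρ]; exact div_pos hε hDpos
  constructor
  · -- Part 1
    obtain ⟨ξ0, hξ0⟩ := exists_subgrad r hr xbar
    have hSne : Set.Nonempty {v : EuclideanSpace ℝ (Fin n) | ∃ ξ ∈ subderiv r xbar,
        v = f' xbar + ContinuousLinearMap.adjoint A ybar + ξ} :=
      ⟨f' xbar + ContinuousLinearMap.adjoint A ybar + ξ0, ξ0, hξ0, rfl⟩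
    refine le_trans (Metric.infDist_le_infDist_of_subset ?_ hSne) hstat
    rintro v ⟨ξ, hξ, rfl⟩
    refine ⟨f' xbar + ξ, fun u => ?_, by abel⟩
    have h1 := hf u xbar
    have h2 := hξ u
    have h3 : (0:ℝ) ≤ μ / 2 * ‖u - xbar‖ ^ 2 := by positivity
    have h4 : f xbar + r xbar + (⟪f' xbar, u - xbar⟫ + ⟪ξ, u - xbar⟫) ≤ f u + r u := by
      linarith
    simpa [inner_add_left] using h4
  · -- Part 2
    have hζ : A xbar - ρ • (ybar - y0) ∈ subderivOn φ Yd ybar := by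
      intro u hu
      have hstep : ∀ t : ℝ, 0 < t → t ≤ 1 →
          ⟪A xbar, u - ybar⟫ - ρ * ⟪ybar - y0, u - ybar⟫ - (φ u - φ ybar)
            ≤ ρ * t / 2 * ‖u - ybar‖ ^ 2 := by
        intro t ht0 ht1
        have he : (1 - t) • ybar + t • u = ybar + t • (u - ybar) := by module
        have hyt : ybar + t • (u - ybar) ∈ Yd := by
          have := hφ.1 hybar hu (by linarith : (0:ℝ) ≤ 1 - t) ht0.le (by ring)
          rwa [he] at this
        have hφt : φ (ybar + t • (u - ybar)) ≤ (1 - t) * φ ybar + t * φ u := by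
          have := hφ.2 hybar hu (by linarith : (0:ℝ) ≤ 1 - t) ht0.le (by ring)
          rw [he] at this
          simpa [smul_eq_mul] using this
        have hm := hmax _ hyt
        have e1 : ⟪ybar + t • (u - ybar), A xbar⟫
            = ⟪ybar, A xbar⟫ + t * ⟪A xbar, u - ybar⟫ := by
          rw [inner_add_left, real_inner_smul_left, real_inner_comm (u - ybar)]
        have e2 : ‖ybar + t • (u - ybar) - y0‖ ^ 2
            = ‖ybar - y0‖ ^ 2 + 2 * (t * ⟪ybar - y0, u - ybar⟫) + t ^ 2 * ‖u - ybar‖ ^ 2 := by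
          have h : ybar + t • (u - ybar) - y0 = (ybar - y0) + t • (u - ybar) := by abel
          rw [h, norm_add_sq_real, real_inner_smul_right, norm_smul, mul_pow,
            Real.norm_eq_abs, sq_abs]
        rw [e1, e2] at hm
        have hcomb : t * (⟪A xbar, u - ybar⟫ - ρ * ⟪ybar - y0, u - ybar⟫ - (φ u - φ ybar))
            ≤ t * (ρ * t / 2 * ‖u - ybar‖ ^ 2) := by nlinarith [hm, hφt]
        exact le_of_mul_le_mul_left hcomb ht0
      have hX : ⟪A xbar, u - ybar⟫ - ρ * ⟪ybar - y0, u - ybar⟫ - (φ u - φ ybar) ≤ 0 := by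
        set X := ⟪A xbar, u - ybar⟫ - ρ * ⟪ybar - y0, u - ybar⟫ - (φ u - φ ybar) with hXdef
        by_contra h
        push_neg at h
        set K := ρ / 2 * ‖u - ybar‖ ^ 2 with hK
        have hK0 : 0 ≤ K := mul_nonneg (by linarith) (sq_nonneg _)
        have ht0pos : 0 < min 1 (X / (2 * (K + 1))) :=
          lt_min one_pos (div_pos h (by linarith))
        have h1 := hstep _ ht0pos (min_le_left _ _)
        have h3 : min 1 (X / (2 * (K + 1))) * (2 * (K + 1)) ≤ X := by
          rw [← le_div_iff₀ (by linarith : (0:ℝ) < 2 * (K + 1))]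
          exact min_le_right _ _
        have h4 : ρ * min 1 (X / (2 * (K + 1))) / 2 * ‖u - ybar‖ ^ 2
            = min 1 (X / (2 * (K + 1))) * K := by rw [hK]; ring
        rw [h4] at h1
        nlinarith [h1, h3, ht0pos, hK0]
      have eζ : ⟪A xbar - ρ • (ybar - y0), u - ybar⟫
          = ⟪A xbar, u - ybar⟫ - ρ * ⟪ybar - y0, u - ybar⟫ := by
        rw [inner_sub_left, real_inner_smul_left]
      rw [eζ]
      linarith
    refine le_trans (Metric.infDist_le_dist_of_mem ⟨_, hζ, rfl⟩) ?_
    rw [dist_zero_left]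
    have h : A xbar - (A xbar - ρ • (ybar - y0)) = ρ • (ybar - y0) := by abel
    rw [h, norm_smul, Real.norm_eq_abs, abs_of_pos hρpos]
    calc ρ * ‖ybar - y0‖ ≤ ρ * Dφ :=
          mul_le_mul_of_nonneg_left (hD ybar hybar y0 hy0) hρpos.le
      _ = ε := by rw [hρ]; field_simp
end
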